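/- arXiv:1712.10123 — 4 statements merged into one kernel-verified Lean document; each statement's English description precedes it below -/
import Mathlib

section
/- In a trim lattice L, the collection of sets of downward labels equals the collection of sets of upward labels: { D^γ(x) : x ∈ L } = { U^γ(y) : y ∈ L }. Consequently rowmotion row^γ(x) := the unique y with D^γ(x) = U^γ(y) is a well-defined bijection of L. -/
/-- An element `x` of a lattice is *left modular* if `(y ⊔ x) ⊓ z = y ⊔ (x ⊓ z)`
for all `y ≤ z`. -/
def LeftModular {L : Type*} [Lattice L] (x : L) : Prop :=
  ∀ y z : L, y ≤ z → (y ⊔ x) ⊓ z = y ⊔ (x ⊓ z)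

/-- The data of an extremal lattice of length `n` together with a fixed
maximal-length chain `x₀ ⋖ ⋯ ⋖ xₙ` and the induced numberings of the
join-irreducibles `j₁, …, jₙ` and meet-irreducibles `m₁, …, mₙ`. -/
structure ExtremalChainData (L : Type*) [Lattice L] [Fintype L] [BoundedOrder L]
    (n : ℕ) where
  x : Fin (n + 1) → L
  x_strictMono : StrictMono x
  x_bot : x 0 = ⊥
  x_top : x (Fin.last n) = ⊤
  maxlen : ∀ (m : ℕ) (c : Fin (m + 1) → L), StrictMono c → m ≤ n
  j : Fin n → L
  m : Fin n → L
  j_irr : ∀ i, SupIrred (j i)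
  m_irr : ∀ i, InfIrred (m i)
  j_inj : Function.Injective j
  m_inj : Function.Injective m
  j_surj : ∀ a : L, SupIrred a → a ∈ Set.range j
  m_surj : ∀ a : L, InfIrred a → a ∈ Set.range m
  x_eq_sup : ∀ i : Fin (n + 1),
    x i = (Finset.univ.filter fun k : Fin n => (k : ℕ) < (i : ℕ)).sup j
  x_eq_inf : ∀ i : Fin (n + 1),
    x i = (Finset.univ.filter fun k : Fin n => (i : ℕ) ≤ (k : ℕ)).inf m

namespace ExtremalChainData

variable {L : Type*} [Lattice L] [Fintype L] [BoundedOrder L] {n : ℕ}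

/-- `x_J`: the set of indices of join-irreducibles lying below `a`. -/
def setJ (D : ExtremalChainData L n) (a : L) : Set (Fin n) := {i | D.j i ≤ a}

/-- `x_M`: the set of indices of meet-irreducibles lying above `a`. -/
def setM (D : ExtremalChainData L n) (a : L) : Set (Fin n) := {i | a ≤ D.m i}

/-- The Galois graph: a directed edge `i → k` when `jᵢ ≰ m_k` and `i ≠ k`. -/
def galoisEdge (D : ExtremalChainData L n) (i k : Fin n) : Prop :=
  ¬ D.j i ≤ D.m k ∧ i ≠ k

/-- The left modular labelling: `i` is the label of the cover `y ⋖ z` iff `i` is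
minimal with `y ⊔ (xᵢ ⊓ z) = z`. -/
def IsLabel (D : ExtremalChainData L n) (y z : L) (i : Fin n) : Prop :=
  y ⊔ (D.x i.succ ⊓ z) = z ∧ ∀ k : Fin n, y ⊔ (D.x k.succ ⊓ z) = z → i ≤ k

open scoped Classical in
/-- `D^γ(a)`: the set of labels of cover relations below `a`. -/
noncomputable def downLabels (D : ExtremalChainData L n) (a : L) : Finset (Fin n) :=
  Finset.univ.filter fun i => ∃ y, y ⋖ a ∧ D.IsLabel y a i

open scoped Classical in
/-- `U^γ(a)`: the set of labels of cover relations above `a`. -/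
noncomputable def upLabels (D : ExtremalChainData L n) (a : L) : Finset (Fin n) :=
  Finset.univ.filter fun i => ∃ z, a ⋖ z ∧ D.IsLabel a z i

/-- The fixed chain consists of left modular elements, i.e. the lattice is trim. -/
def IsTrim (D : ExtremalChainData L n) : Prop := ∀ i, LeftModular (D.x i)

end ExtremalChainData

open ExtremalChainData

set_option linter.unusedSectionVars false
set_option linter.unusedVariables false

open scoped Classical
open Finset

section GenericLattice

variable {M : Type*} [Lattice M] [Fintype M] [BoundedOrder M]

lemma gen_exists_minimal {p : M → Prop} (h : ∃ a, p a) :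
    ∃ a, p a ∧ ∀ b, p b → ¬ b < a := by
  obtain ⟨a, ha⟩ := h
  obtain ⟨b, hb, hmin⟩ := Finset.exists_minimal (s := Finset.univ.filter p)
    ⟨a, by simp [ha]⟩
  refine ⟨b, by simpa using hb, fun c hc hcb => lt_irrefl _ (hcb.trans_le (hmin (by simp [hc]) hcb.le))⟩

lemma gen_exists_maximal {p : M → Prop} (h : ∃ a, p a) :
    ∃ a, p a ∧ ∀ b, p b → ¬ a < b := by
  obtain ⟨a, ha⟩ := h
  obtain ⟨b, hb, hmax⟩ := Finset.exists_maximal (s := Finset.univ.filter p)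
    ⟨a, by simp [ha]⟩
  refine ⟨b, by simpa using hb, fun c hc hbc => lt_irrefl _ (hbc.trans_le (hmax (by simp [hc]) hbc.le))⟩

lemma exists_covBy_right {a b : M} (h : a < b) : ∃ c, a ⋖ c ∧ c ≤ b := by
  obtain ⟨c, ⟨hac, hcb⟩, hmin⟩ := gen_exists_minimal (p := fun c => a < c ∧ c ≤ b) ⟨b, h, le_rfl⟩
  exact ⟨c, ⟨hac, fun d had hdc => hmin d ⟨had, hdc.le.trans hcb⟩ hdc⟩, hcb⟩

lemma exists_covBy_left {a b : M} (h : a < b) : ∃ c, a ≤ c ∧ c ⋖ b := by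
  obtain ⟨c, ⟨hac, hcb⟩, hmax⟩ := gen_exists_maximal (p := fun c => a ≤ c ∧ c < b) ⟨a, le_rfl, h⟩
  exact ⟨c, hac, hcb, fun d hcd hdb => hmax d ⟨hac.trans hcd.le, hdb⟩ hcd⟩

lemma sup_irreds_eq (a : M) :
    (Finset.univ.filter fun v => SupIrred v ∧ v ≤ a).sup id = a := by
  have hle : ∀ b : M, (Finset.univ.filter fun v => SupIrred v ∧ v ≤ b).sup id ≤ b := by
    intro b; exact Finset.sup_le fun v hv => (Finset.mem_filter.1 hv).2.2
  refine le_antisymm (hle a) ?_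
  induction a using WellFoundedLT.induction with
  | _ a IH =>
    by_cases hirr : SupIrred a
    · exact Finset.le_sup (f := id) (by simp [hirr])
    · by_cases hbot : a = ⊥
      · simp [hbot]
      · rw [SupIrred] at hirr
        push_neg at hirr
        have hmin : ¬ IsMin a := by
          intro hm
          exact hbot (le_antisymm (hm bot_le) bot_le)
        obtain ⟨b, c, hbc, hb, hc⟩ := hirr hmin
        have hblt : b < a := lt_of_le_of_ne (hbc ▸ le_sup_left) hb
        have hclt : c < a := lt_of_le_of_ne (hbc ▸ le_sup_right) hc
        have hmono : ∀ d : M, d ≤ a →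
            (Finset.univ.filter fun v => SupIrred v ∧ v ≤ d).sup id ≤
            (Finset.univ.filter fun v => SupIrred v ∧ v ≤ a).sup id := by
          intro d hd
          exact Finset.sup_le fun v hv => Finset.le_sup (f := id)
            (by simp only [Finset.mem_filter, Finset.mem_univ, true_and] at hv ⊢
                exact ⟨hv.1, hv.2.trans hd⟩)
        calc a = b ⊔ c := hbc.symm
        _ ≤ _ := sup_le
            ((IH b hblt).trans (hmono b hblt.le))
            ((IH c hclt).trans (hmono c hclt.le))

lemma inf_irreds_eq (a : M) :
    (Finset.univ.filter fun v => InfIrred v ∧ a ≤ v).inf id = a := by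
  have hle : ∀ b : M, b ≤ (Finset.univ.filter fun v => InfIrred v ∧ b ≤ v).inf id := by
    intro b; exact Finset.le_inf fun v hv => (Finset.mem_filter.1 hv).2.2
  refine le_antisymm ?_ (hle a)
  induction a using WellFoundedGT.induction with
  | _ a IH =>
    by_cases hirr : InfIrred a
    · exact Finset.inf_le (by simp [hirr])
    · by_cases htop : a = ⊤
      · simp [htop]
      · rw [InfIrred] at hirr
        push_neg at hirr
        have hmax : ¬ IsMax a := by
          intro hm
          exact htop (le_antisymm le_top (hm le_top))
        obtain ⟨b, c, hbc, hb, hc⟩ := hirr hmax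
        have hblt : a < b := lt_of_le_of_ne (hbc ▸ inf_le_left) (fun h => hb h.symm)
        have hclt : a < c := lt_of_le_of_ne (hbc ▸ inf_le_right) (fun h => hc h.symm)
        have hmono : ∀ d : M, a ≤ d →
            (Finset.univ.filter fun v => InfIrred v ∧ a ≤ v).inf id ≤
            (Finset.univ.filter fun v => InfIrred v ∧ d ≤ v).inf id := by
          intro d hd
          exact Finset.le_inf fun v hv => Finset.inf_le
            (by simp only [Finset.mem_filter, Finset.mem_univ, true_and] at hv ⊢
                exact ⟨hv.1, hd.trans hv.2⟩)
        calc (Finset.univ.filter fun v => InfIrred v ∧ a ≤ v).inf id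
            ≤ b ⊓ c := le_inf
              ((hmono b hblt.le).trans (IH b hblt))
              ((hmono c hclt.le).trans (IH c hclt))
        _ = a := hbc

lemma exists_supIrred_not_le {u v : M} (h : ¬ u ≤ v) :
    ∃ w, SupIrred w ∧ w ≤ u ∧ ¬ w ≤ v := by
  by_contra hc
  push_neg at hc
  apply h
  conv_lhs => rw [← sup_irreds_eq u]
  exact Finset.sup_le fun w hw => by
    simp only [Finset.mem_filter, Finset.mem_univ, true_and] at hw
    exact hc w hw.1 hw.2

lemma exists_infIrred_not_le {u v : M} (h : ¬ u ≤ v) :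
    ∃ w, InfIrred w ∧ v ≤ w ∧ ¬ u ≤ w := by
  by_contra hc
  push_neg at hc
  apply h
  conv_rhs => rw [← inf_irreds_eq v]
  exact Finset.le_inf fun w hw => by
    simp only [Finset.mem_filter, Finset.mem_univ, true_and] at hw
    exact hc w hw.1 hw.2

lemma chain_le_card_supIrred {p : ℕ} (c : Fin (p + 1) → M) (hc : StrictMono c) :
    p ≤ (Finset.univ.filter fun v : M => SupIrred v).card := by
  have step : ∀ s : Fin p, ∃ w, SupIrred w ∧ w ≤ c s.succ ∧ ¬ w ≤ c s.castSucc := by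
    intro s
    exact exists_supIrred_not_le (not_le_of_gt (hc (Fin.castSucc_lt_succ (i := s))))
  choose g hg1 hg2 hg3 using step
  have hinj : Function.Injective g := by
    have key : ∀ s t : Fin p, s < t → g s ≠ g t := by
      intro s t hst heq
      apply hg3 t
      rw [← heq]
      exact (hg2 s).trans (hc.monotone (by
        simp only [Fin.le_def, Fin.val_succ, Fin.coe_castSucc]
        omega))
    intro s t heq
    rcases lt_trichotomy s t with h | h | h
    · exact absurd heq (key s t h)
    · exact h
    · exact absurd heq.symm (key t s h)
  calc p = Fintype.card (Fin p) := (Fintype.card_fin p).symm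
  _ = (Finset.univ : Finset (Fin p)).card := (Finset.card_univ).symm
  _ ≤ _ := Finset.card_le_card_of_injOn g
      (fun s _ => by simp [hg1 s]) (hinj.injOn)

lemma chain_le_card_infIrred {p : ℕ} (c : Fin (p + 1) → M) (hc : StrictMono c) :
    p ≤ (Finset.univ.filter fun v : M => InfIrred v).card := by
  have step : ∀ s : Fin p, ∃ w, InfIrred w ∧ c s.castSucc ≤ w ∧ ¬ c s.succ ≤ w := by
    intro s
    exact exists_infIrred_not_le (not_le_of_gt (hc (Fin.castSucc_lt_succ (i := s))))
  choose g hg1 hg2 hg3 using step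
  have hinj : Function.Injective g := by
    have key : ∀ s t : Fin p, s < t → g s ≠ g t := by
      intro s t hst heq
      apply hg3 s
      rw [heq]
      refine le_trans (hc.monotone (by
        simp only [Fin.le_def, Fin.val_succ, Fin.coe_castSucc]
        omega)) (hg2 t)
    intro s t heq
    rcases lt_trichotomy s t with h | h | h
    · exact absurd heq (key s t h)
    · exact h
    · exact absurd heq.symm (key t s h)
  calc p = Fintype.card (Fin p) := (Fintype.card_fin p).symm
  _ = (Finset.univ : Finset (Fin p)).card := (Finset.card_univ).symm
  _ ≤ _ := Finset.card_le_card_of_injOn g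
      (fun s _ => by simp [hg1 s]) (hinj.injOn)

end GenericLattice

namespace ExtremalChainData

variable {L : Type*} [Lattice L] [Fintype L] [BoundedOrder L] {n : ℕ}
variable (D : ExtremalChainData L n)

/-- The chain, reindexed over `ℕ` (constant `⊤` above `n`). -/
noncomputable def X (s : ℕ) : L := D.x ⟨min s n, by omega⟩

lemma X_of_le {s : ℕ} (hs : s ≤ n) : D.X s = D.x ⟨s, by omega⟩ := by
  simp [X, min_eq_left hs]

lemma X_zero : D.X 0 = ⊥ := by
  rw [X_of_le D (Nat.zero_le n)]; exact D.x_bot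

lemma X_top {s : ℕ} (hs : n ≤ s) : D.X s = ⊤ := by
  have : min s n = n := min_eq_right hs
  simp only [X, this]
  exact D.x_top

lemma X_mono : Monotone D.X := by
  intro s t hst
  exact D.x_strictMono.monotone (by simp [Fin.le_def]; omega)

lemma X_lt {s t : ℕ} (hst : s < t) (ht : t ≤ n) : D.X s < D.X t := by
  apply D.x_strictMono
  simp [Fin.lt_def]; omega

lemma x_castSucc (t : Fin n) : D.x t.castSucc = D.X t := by
  rw [X_of_le D (le_of_lt t.isLt)]; rfl

lemma x_succ (t : Fin n) : D.x t.succ = D.X (t + 1) := by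
  rw [X_of_le D t.isLt]; rfl

lemma X_eq_sup {s : ℕ} (hs : s ≤ n) :
    D.X s = (Finset.univ.filter fun k : Fin n => (k : ℕ) < s).sup D.j := by
  rw [X_of_le D hs]; exact D.x_eq_sup _

lemma X_eq_inf {s : ℕ} (hs : s ≤ n) :
    D.X s = (Finset.univ.filter fun k : Fin n => s ≤ (k : ℕ)).inf D.m := by
  rw [X_of_le D hs]; exact D.x_eq_inf _

lemma j_le_X {t : Fin n} {s : ℕ} (h : (t : ℕ) < s) : D.j t ≤ D.X s := by
  by_cases hs : s ≤ n
  · rw [X_eq_sup D hs]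
    exact Finset.le_sup (by simp [h])
  · rw [X_top D (by omega)]; exact le_top

lemma X_le_m {t : Fin n} {s : ℕ} (h : s ≤ (t : ℕ)) : D.X s ≤ D.m t := by
  rw [X_eq_inf D (by have := t.isLt; omega)]
  exact Finset.inf_le (by simp [h])

lemma X_le_m_self (t : Fin n) : D.X t ≤ D.m t := X_le_m D le_rfl

lemma X_succ_sup (t : Fin n) : D.X (t + 1) = D.X t ⊔ D.j t := by
  have h1 : (Finset.univ.filter fun k : Fin n => (k : ℕ) < (t : ℕ) + 1)
      = insert t (Finset.univ.filter fun k : Fin n => (k : ℕ) < (t : ℕ)) := by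
    ext k
    simp only [Finset.mem_filter, Finset.mem_univ, true_and, Finset.mem_insert]
    constructor
    · intro hk
      rcases Nat.lt_succ_iff_lt_or_eq.1 hk with h | h
      · exact Or.inr h
      · exact Or.inl (Fin.ext h)
    · rintro (rfl | hk)
      · omega
      · omega
  rw [X_eq_sup D t.isLt, X_eq_sup D (le_of_lt t.isLt), h1, Finset.sup_insert, sup_comm]

lemma m_inf_X (t : Fin n) : D.m t ⊓ D.X (t + 1) = D.X t := by
  have h1 : (Finset.univ.filter fun k : Fin n => (t : ℕ) ≤ (k : ℕ))
      = insert t (Finset.univ.filter fun k : Fin n => (t : ℕ) + 1 ≤ (k : ℕ)) := by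
    ext k
    simp only [Finset.mem_filter, Finset.mem_univ, true_and, Finset.mem_insert]
    constructor
    · intro hk
      rcases Nat.eq_or_lt_of_le hk with h | h
      · exact Or.inl (Fin.ext h.symm)
      · exact Or.inr h
    · rintro (rfl | hk)
      · omega
      · omega
  rw [X_eq_inf D (le_of_lt t.isLt), X_eq_inf D t.isLt, h1, Finset.inf_insert]

lemma j_not_le_X {t : Fin n} {s : ℕ} (h : s ≤ (t : ℕ)) : ¬ D.j t ≤ D.X s := by
  intro hle
  have h1 : D.j t ≤ D.X t := hle.trans (X_mono D h)
  have h2 : D.X ((t : ℕ) + 1) = D.X t := by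
    rw [X_succ_sup D t]
    exact sup_eq_left.2 h1
  exact absurd h2 (ne_of_gt (X_lt D (Nat.lt_succ_self _) t.isLt))

lemma not_X_le_m {t : Fin n} {s : ℕ} (h : (t : ℕ) < s) : ¬ D.X s ≤ D.m t := by
  intro hle
  have h1 : D.X ((t : ℕ) + 1) ≤ D.m t := (X_mono D (by omega)).trans hle
  have h2 : D.X ((t : ℕ) + 1) = D.X t := by
    conv_rhs => rw [← m_inf_X D t]
    exact le_antisymm (le_inf h1 le_rfl) inf_le_right
  exact absurd h2 (ne_of_gt (X_lt D (Nat.lt_succ_self _) t.isLt))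

lemma j_ne_bot (t : Fin n) : D.j t ≠ ⊥ := by
  intro h
  exact (D.j_irr t).1 (h ▸ isMin_bot)

lemma m_ne_top (t : Fin n) : D.m t ≠ ⊤ := by
  intro h
  exact (D.m_irr t).1 (h ▸ isMax_top)

lemma j_not_le_m_self (t : Fin n) : ¬ D.j t ≤ D.m t := by
  intro h
  have : D.j t ≤ D.X t := by
    rw [← m_inf_X D t]
    exact le_inf h (j_le_X D (Nat.lt_succ_self _))
  exact j_not_le_X D le_rfl this

lemma j_le_m_of_lt {t s : Fin n} (h : (t : ℕ) < (s : ℕ)) : D.j t ≤ D.m s :=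
  (j_le_X D (show (t : ℕ) < (t : ℕ) + 1 by omega)).trans (X_le_m D (by omega))

/-- Consecutive chain elements are covers (uses maximality of the chain). -/
lemma X_covBy {s : ℕ} (hs : s < n) : D.X s ⋖ D.X (s + 1) := by
  refine ⟨X_lt D (Nat.lt_succ_self s) hs, ?_⟩
  intro c hc1 hc2
  -- build a longer chain
  set f : Fin (n + 2) → L := fun p =>
    if (p : ℕ) ≤ s then D.X p else if (p : ℕ) = s + 1 then c else D.X ((p : ℕ) - 1) with hf
  have hval1 : ∀ p : Fin (n + 2), (p : ℕ) ≤ s → f p = D.X p := by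
    intro p hp; simp only [hf]; rw [if_pos hp]
  have hval2 : ∀ p : Fin (n + 2), (p : ℕ) = s + 1 → f p = c := by
    intro p hp; simp only [hf]; rw [if_neg (by omega), if_pos hp]
  have hval3 : ∀ p : Fin (n + 2), s + 1 < (p : ℕ) → f p = D.X ((p : ℕ) - 1) := by
    intro p hp; simp only [hf]; rw [if_neg (by omega), if_neg (by omega)]
  have hmono : StrictMono f := by
    rw [Fin.strictMono_iff_lt_succ]
    intro i
    have hiv : (i : ℕ) < n + 1 := i.isLt
    have hcs : ((i.castSucc : Fin (n + 2)) : ℕ) = (i : ℕ) := rfl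
    have hsc : ((i.succ : Fin (n + 2)) : ℕ) = (i : ℕ) + 1 := rfl
    rcases lt_trichotomy ((i : ℕ)) s with h | h | h
    · rw [hval1 _ (by omega), hval1 _ (by omega), hcs, hsc]
      exact X_lt D (by omega) (by omega)
    · rw [hval1 _ (by omega), hval2 _ (by omega), hcs, h]
      exact hc1
    · rcases Nat.eq_or_lt_of_le h with h' | h'
      · rw [hval2 _ (by omega), hval3 _ (by omega), hsc]
        have : (i : ℕ) + 1 - 1 = s + 1 := by omega
        rw [this]
        exact hc2
      · rw [hval3 _ (by omega), hval3 _ (by omega), hcs, hsc]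
        have h2 : (i : ℕ) + 1 - 1 = ((i : ℕ) - 1) + 1 := by omega
        rw [h2]
        exact X_lt D (Nat.lt_succ_self _) (by omega)
  have := D.maxlen (n + 1) f hmono
  omega

end ExtremalChainData

namespace ExtremalChainData

variable {L : Type*} [Lattice L] [Fintype L] [BoundedOrder L] {n : ℕ}
variable {D : ExtremalChainData L n}

section LabelTheory

variable (hD : D.IsTrim)
include hD

lemma lm_eq {y z : L} (hyz : y ≤ z) (s : ℕ) :
    (y ⊔ D.X s) ⊓ z = y ⊔ (D.X s ⊓ z) := hD _ y z hyz

lemma cond_iff {y z : L} (hyz : y ≤ z) (t : Fin n) :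
    y ⊔ (D.x t.succ ⊓ z) = z ↔ z ≤ y ⊔ D.X ((t : ℕ) + 1) := by
  rw [x_succ, ← lm_eq hD hyz]
  constructor
  · intro h; rw [← h]; exact inf_le_left
  · intro h; exact le_antisymm inf_le_right (le_inf (h.trans le_rfl) le_rfl)

lemma isLabel_iff {y z : L} (hyz : y ≤ z) (t : Fin n) :
    D.IsLabel y z t ↔ (z ≤ y ⊔ D.X ((t : ℕ) + 1) ∧
      ∀ k : Fin n, z ≤ y ⊔ D.X ((k : ℕ) + 1) → t ≤ k) := by
  unfold IsLabel
  constructor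
  · intro ⟨h1, h2⟩
    exact ⟨(cond_iff hD hyz t).1 h1, fun k hk => h2 k ((cond_iff hD hyz k).2 hk)⟩
  · intro ⟨h1, h2⟩
    exact ⟨(cond_iff hD hyz t).2 h1, fun k hk => h2 k ((cond_iff hD hyz k).1 hk)⟩

lemma n_pos_of_lt {y z : L} (h : y < z) : 0 < n := by
  rcases Nat.eq_zero_or_pos n with hn | hn
  · exfalso
    have hbot : D.X 0 = ⊥ := X_zero D
    have htop : D.X 0 = ⊤ := X_top D (by omega)
    have : y ≤ z := h.le
    have hyz : z ≤ y := by
      calc z ≤ ⊤ := le_top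
      _ = ⊥ := by rw [← htop, hbot]
      _ ≤ y := bot_le
    exact absurd (le_antisymm this hyz) (ne_of_lt h)
  · exact hn

lemma exists_isLabel {y z : L} (h : y ⋖ z) : ∃ t, D.IsLabel y z t := by
  have hn : 0 < n := n_pos_of_lt hD h.lt
  have hne : (Finset.univ.filter fun t : Fin n => z ≤ y ⊔ D.X ((t : ℕ) + 1)).Nonempty := by
    refine ⟨⟨n - 1, by omega⟩, ?_⟩
    simp only [Finset.mem_filter, Finset.mem_univ, true_and]
    have : n - 1 + 1 = n := by omega
    rw [this, X_top D le_rfl]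
    exact le_trans le_top le_sup_right
  obtain ⟨t, ht, hmin⟩ := Finset.exists_minimal hne
  simp only [Finset.mem_filter, Finset.mem_univ, true_and] at ht
  refine ⟨t, (isLabel_iff hD h.lt.le t).2 ⟨ht, fun k hk => ?_⟩⟩
  by_contra hlt
  exact hlt (hmin (by simp [hk]) (by omega))

lemma isLabel_unique {y z : L} (hyz : y ≤ z) {t t' : Fin n}
    (h1 : D.IsLabel y z t) (h2 : D.IsLabel y z t') : t = t' :=
  le_antisymm (h1.2 t' h2.1) (h2.2 t h1.1)

variable {y z : L} {t : Fin n}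

lemma label_le_sup (hyz : y ≤ z) (hl : D.IsLabel y z t) : z ≤ y ⊔ D.X ((t : ℕ) + 1) :=
  ((isLabel_iff hD hyz t).1 hl).1

lemma label_not_le_sup (hc : y ⋖ z) (hl : D.IsLabel y z t) : ¬ z ≤ y ⊔ D.X t := by
  intro hle
  rcases Nat.eq_zero_or_pos (t : ℕ) with h0 | h0
  · rw [h0, X_zero D, sup_bot_eq] at hle
    exact absurd (le_antisymm hc.lt.le hle) (ne_of_lt hc.lt)
  · have := ((isLabel_iff hD hc.lt.le t).1 hl).2 ⟨(t : ℕ) - 1, by omega⟩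
      (by rw [show (t : ℕ) - 1 + 1 = (t : ℕ) by omega]; exact hle)
    simp only [Fin.le_def] at this
    omega

lemma label_inf_le (hc : y ⋖ z) (hl : D.IsLabel y z t) : D.X t ⊓ z ≤ y := by
  have h2 : y ≤ (y ⊔ D.X t) ⊓ z := le_inf le_sup_left hc.lt.le
  rcases hc.eq_or_eq h2 inf_le_right with h | h
  · calc D.X (t : ℕ) ⊓ z ≤ (y ⊔ D.X t) ⊓ z := inf_le_inf_right _ le_sup_right
    _ = y := h
  · exact absurd (h ▸ inf_le_left) (label_not_le_sup hD hc hl)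

lemma label_not_inf_le (hc : y ⋖ z) (hl : D.IsLabel y z t) : ¬ D.X ((t : ℕ) + 1) ⊓ z ≤ y := by
  intro hle
  have h1 : z ≤ y ⊔ D.X ((t : ℕ) + 1) := label_le_sup hD hc.lt.le hl
  have h2 : (y ⊔ D.X ((t : ℕ) + 1)) ⊓ z = y ⊔ (D.X ((t : ℕ) + 1) ⊓ z) := lm_eq hD hc.lt.le _
  have h3 : z = y ⊔ (D.X ((t : ℕ) + 1) ⊓ z) := by
    rw [← h2]
    exact le_antisymm (le_inf h1 le_rfl) inf_le_right
  rw [sup_eq_left.2 hle] at h3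
  exact absurd h3.symm (ne_of_lt hc.lt)

/-- Minimal complements in chain covers are the canonical join irreducibles. -/
lemma j_le_of_complement {u : L} {s : Fin n} (h1 : u ≤ D.X ((s : ℕ) + 1))
    (h2 : u ⊔ D.X s = D.X ((s : ℕ) + 1)) : D.j s ≤ u := by
  obtain ⟨w, ⟨hw1, hw2⟩, hmin⟩ := gen_exists_minimal
    (p := fun w => w ≤ u ∧ w ⊔ D.X s = D.X ((s : ℕ) + 1)) ⟨u, le_rfl, h2⟩
  have hirr : SupIrred w := by
    constructor
    · intro hm
      have hw : w = ⊥ := le_antisymm (hm bot_le) bot_le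
      rw [hw, bot_sup_eq] at hw2
      exact absurd hw2 (ne_of_lt (X_lt D (Nat.lt_succ_self _) s.isLt))
    · intro b c hbc
      by_contra hne
      push_neg at hne
      have hb : b ≤ u := le_trans (hbc ▸ le_sup_left) hw1
      have hcu : c ≤ u := le_trans (hbc ▸ le_sup_right) hw1
      have hbs : b ⊔ D.X s ≤ D.X ((s : ℕ) + 1) := by
        rw [← hw2]; exact sup_le_sup_right (hbc ▸ le_sup_left) _
      have hcs : c ⊔ D.X s ≤ D.X ((s : ℕ) + 1) := by
        rw [← hw2]; exact sup_le_sup_right (hbc ▸ le_sup_right) _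
      have hcov := X_covBy D s.isLt
      rcases hcov.eq_or_eq (le_sup_right : D.X s ≤ b ⊔ D.X s) hbs with hbx | hbx
      · rcases hcov.eq_or_eq (le_sup_right : D.X s ≤ c ⊔ D.X s) hcs with hcx | hcx
        · exfalso
          have hble : b ≤ D.X s := le_trans le_sup_left hbx.le
          have hcle : c ≤ D.X s := le_trans le_sup_left hcx.le
          have : w ⊔ D.X s = D.X s := sup_eq_right.2 (hbc ▸ sup_le hble hcle)
          rw [this] at hw2
          exact absurd hw2 (ne_of_lt (X_lt D (Nat.lt_succ_self _) s.isLt))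
        · have : c = w := by
            by_contra hcw
            exact hmin c ⟨hcu, hcx⟩ (lt_of_le_of_ne (hbc ▸ le_sup_right) hcw)
          exact hne.2 this
      · have : b = w := by
          by_contra hbw
          exact hmin b ⟨hb, hbx⟩ (lt_of_le_of_ne (hbc ▸ le_sup_left) hbw)
        exact hne.1 this
  obtain ⟨a, ha⟩ := D.j_surj w hirr
  have haX : D.j a ≤ D.X ((s : ℕ) + 1) := ha ▸ (hw1.trans h1)
  have halt : (a : ℕ) < (s : ℕ) + 1 := by
    by_contra hge
    exact j_not_le_X D (by omega) haX
  have hage : ¬ (a : ℕ) < (s : ℕ) := by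
    intro hlt
    have : D.j a ≤ D.X s := j_le_X D hlt
    rw [ha] at this
    have : w ⊔ D.X s = D.X s := sup_eq_right.2 this
    rw [this] at hw2
    exact absurd hw2 (ne_of_lt (X_lt D (Nat.lt_succ_self _) s.isLt))
  have : a = s := Fin.ext (by omega)
  rw [← this, ha]
  exact hw1

/-- Maximal complements in chain covers are the canonical meet irreducibles. -/
lemma le_m_of_complement {w : L} {s : Fin n} (h1 : D.X s ≤ w)
    (h2 : w ⊓ D.X ((s : ℕ) + 1) = D.X s) : w ≤ D.m s := by
  obtain ⟨w', ⟨hw1, hw2⟩, hmax⟩ := gen_exists_maximal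
    (p := fun w' => w ≤ w' ∧ w' ⊓ D.X ((s : ℕ) + 1) = D.X s) ⟨w, le_rfl, h2⟩
  have hirr : InfIrred w' := by
    constructor
    · intro hm
      have hw : w' = ⊤ := le_antisymm le_top (hm le_top)
      rw [hw, top_inf_eq] at hw2
      exact absurd hw2.symm (ne_of_lt (X_lt D (Nat.lt_succ_self _) s.isLt))
    · intro b c hbc
      by_contra hne
      push_neg at hne
      have hb : w ≤ b := le_trans hw1 (hbc ▸ inf_le_left)
      have hcu : w ≤ c := le_trans hw1 (hbc ▸ inf_le_right)
      have hbs : D.X s ≤ b ⊓ D.X ((s : ℕ) + 1) := by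
        rw [← hw2]; exact inf_le_inf_right _ (hbc ▸ inf_le_left)
      have hcs : D.X s ≤ c ⊓ D.X ((s : ℕ) + 1) := by
        rw [← hw2]; exact inf_le_inf_right _ (hbc ▸ inf_le_right)
      have hcov := X_covBy D s.isLt
      rcases hcov.eq_or_eq hbs (inf_le_right : b ⊓ D.X ((s : ℕ) + 1) ≤ _) with hbx | hbx
      · have : b = w' := by
          by_contra hbw
          exact hmax b ⟨hb, hbx⟩ (lt_of_le_of_ne (hbc ▸ inf_le_left) (Ne.symm hbw))
        exact hne.1 this
      · rcases hcov.eq_or_eq hcs (inf_le_right : c ⊓ D.X ((s : ℕ) + 1) ≤ _) with hcx | hcx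
        · have : c = w' := by
            by_contra hcw
            exact hmax c ⟨hcu, hcx⟩ (lt_of_le_of_ne (hbc ▸ inf_le_right) (Ne.symm hcw))
          exact hne.2 this
        · exfalso
          have hbX : D.X ((s : ℕ) + 1) ≤ b := hbx ▸ inf_le_left
          have hcX : D.X ((s : ℕ) + 1) ≤ c := hcx ▸ inf_le_left
          have : D.X ((s : ℕ) + 1) ≤ w' := hbc ▸ le_inf hbX hcX
          have h3 : w' ⊓ D.X ((s : ℕ) + 1) = D.X ((s : ℕ) + 1) := inf_eq_right.2 this
          rw [h3] at hw2
          exact absurd hw2 (ne_of_gt (X_lt D (Nat.lt_succ_self _) s.isLt))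
  obtain ⟨a, ha⟩ := D.m_surj w' hirr
  have haX : D.X s ≤ D.m a := ha ▸ (h1.trans hw1)
  have halt : (s : ℕ) ≤ (a : ℕ) := by
    by_contra hge
    exact not_X_le_m D (by omega) haX
  have hage : ¬ (s : ℕ) < (a : ℕ) := by
    intro hlt
    have hXa : D.X ((s : ℕ) + 1) ≤ D.m a := X_le_m D (by omega)
    rw [ha] at hXa
    have : w' ⊓ D.X ((s : ℕ) + 1) = D.X ((s : ℕ) + 1) := inf_eq_right.2 hXa
    rw [this] at hw2
    exact absurd hw2 (ne_of_gt (X_lt D (Nat.lt_succ_self _) s.isLt))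
  have : a = s := Fin.ext (by omega)
  rw [← this, ha]
  exact hw1

end LabelTheory

end ExtremalChainData

namespace ExtremalChainData

variable {L : Type*} [Lattice L] [Fintype L] [BoundedOrder L] {n : ℕ}
variable {D : ExtremalChainData L n}

section MainFacts

variable (hD : D.IsTrim) {y z : L} {t : Fin n}
include hD

lemma main_le_m (hc : y ⋖ z) (hl : D.IsLabel y z t) : y ≤ D.m t := by
  have hXt : ¬ D.X ((t : ℕ) + 1) ≤ y ⊔ D.X t := by
    intro h
    exact label_not_le_sup hD hc hl ((label_le_sup hD hc.lt.le hl).trans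
      (sup_le le_sup_left (h.trans le_rfl)))
  have hkey : (y ⊔ D.X t) ⊓ D.X ((t : ℕ) + 1) = D.X t := by
    rcases (X_covBy D t.isLt).eq_or_eq
        (le_inf le_sup_right (X_mono D (Nat.le_succ _)) :
          D.X t ≤ (y ⊔ D.X t) ⊓ D.X ((t : ℕ) + 1))
        (inf_le_right : (y ⊔ D.X t) ⊓ D.X ((t : ℕ) + 1) ≤ _) with h | h
    · exact h
    · exact absurd (h ▸ inf_le_left) hXt
  exact le_sup_left.trans (le_m_of_complement hD le_sup_right hkey)

lemma main_not_le_m (hc : y ⋖ z) (hl : D.IsLabel y z t) : ¬ z ≤ D.m t := by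
  intro h
  apply label_not_inf_le hD hc hl
  have h1 : D.X ((t : ℕ) + 1) ⊓ z ≤ D.X t := by
    rw [← m_inf_X D t]
    exact le_inf (inf_le_right.trans h) inf_le_left
  exact (le_inf h1 inf_le_right).trans (label_inf_le hD hc hl)

lemma main_inf (hc : y ⋖ z) (hl : D.IsLabel y z t) : z ⊓ D.m t = y := by
  rcases hc.eq_or_eq (le_inf hc.lt.le (main_le_m hD hc hl) : y ≤ z ⊓ D.m t)
      (inf_le_left : z ⊓ D.m t ≤ z) with h | h
  · exact h
  · exact absurd (h ▸ inf_le_right) (main_not_le_m hD hc hl)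

lemma main_j_le (hc : y ⋖ z) (hl : D.IsLabel y z t) : D.j t ≤ D.X ((t : ℕ) + 1) ⊓ z := by
  have hu : ¬ D.X ((t : ℕ) + 1) ⊓ z ≤ D.X t := by
    intro h
    exact label_not_inf_le hD hc hl ((le_inf h inf_le_right).trans (label_inf_le hD hc hl))
  have hsup : (D.X ((t : ℕ) + 1) ⊓ z) ⊔ D.X t = D.X ((t : ℕ) + 1) := by
    rcases (X_covBy D t.isLt).eq_or_eq
        (le_sup_right : D.X t ≤ (D.X ((t : ℕ) + 1) ⊓ z) ⊔ D.X t)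
        (sup_le inf_le_left (X_mono D (Nat.le_succ _))) with h | h
    · exact absurd (le_sup_left.trans h.le) hu
    · exact h
  exact j_le_of_complement hD inf_le_left hsup

lemma main_j_le_z (hc : y ⋖ z) (hl : D.IsLabel y z t) : D.j t ≤ z :=
  (main_j_le hD hc hl).trans inf_le_right

lemma main_j_not_le (hc : y ⋖ z) (hl : D.IsLabel y z t) : ¬ D.j t ≤ y := by
  intro h
  apply label_not_le_sup hD hc hl
  calc z ≤ y ⊔ D.X ((t : ℕ) + 1) := label_le_sup hD hc.lt.le hl
  _ = y ⊔ (D.X t ⊔ D.j t) := by rw [X_succ_sup]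
  _ ≤ y ⊔ D.X t := sup_le le_sup_left (sup_le le_sup_right (h.trans le_sup_left))

lemma main_sup (hc : y ⋖ z) (hl : D.IsLabel y z t) : y ⊔ D.j t = z := by
  rcases hc.eq_or_eq (le_sup_left : y ≤ y ⊔ D.j t)
      (sup_le hc.lt.le (main_j_le_z hD hc hl)) with h | h
  · exact absurd (h ▸ le_sup_right) (main_j_not_le hD hc hl)
  · exact h

/-- Converse of the main facts: the four conditions pin down the label. -/
lemma label_rev (hc : y ⋖ z) (h1 : D.j t ≤ z) (h2 : ¬ D.j t ≤ y)
    (h3 : y ≤ D.m t) (h4 : ¬ z ≤ D.m t) : D.IsLabel y z t := by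
  obtain ⟨s, hs⟩ := exists_isLabel hD hc
  have hinfm : z ⊓ D.m t = y := by
    rcases hc.eq_or_eq (le_inf hc.lt.le h3 : y ≤ z ⊓ D.m t) inf_le_left with h | h
    · exact h
    · exact absurd (h ▸ inf_le_right) h4
  rcases lt_trichotomy (s : ℕ) (t : ℕ) with h | h | h
  · exfalso
    apply main_j_not_le hD hc hs
    rw [← hinfm]
    exact le_inf (main_j_le_z hD hc hs) (j_le_m_of_lt D h)
  · rwa [show s = t from Fin.ext h] at hs
  · exfalso
    apply h2
    rw [← main_inf hD hc hs]
    exact le_inf h1 (j_le_m_of_lt D h)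

lemma label_min (hc : y ⋖ z) (hl : D.IsLabel y z t) {a : Fin n}
    (h1 : D.j a ≤ z) (h2 : ¬ D.j a ≤ y) : t ≤ a := by
  by_contra hlt
  apply h2
  rw [← main_inf hD hc hl]
  exact le_inf h1 (j_le_m_of_lt D (by omega))

lemma label_max (hc : y ⋖ z) (hl : D.IsLabel y z t) {a : Fin n}
    (h1 : y ≤ D.m a) (h2 : ¬ z ≤ D.m a) : a ≤ t := by
  by_contra hlt
  apply main_j_not_le hD hc hl
  have hinfm : z ⊓ D.m a = y := by
    rcases hc.eq_or_eq (le_inf hc.lt.le h1 : y ≤ z ⊓ D.m a) inf_le_left with h | h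
    · exact h
    · exact absurd (h ▸ inf_le_right) h2
  rw [← hinfm]
  exact le_inf (main_j_le_z hD hc hl) (j_le_m_of_lt D (by omega))

end MainFacts

section Membership

variable (hD : D.IsTrim) {a : L} {t : Fin n}

lemma mem_downLabels {a : L} {t : Fin n} :
    t ∈ D.downLabels a ↔ ∃ y, y ⋖ a ∧ D.IsLabel y a t := by
  simp [downLabels]

lemma mem_upLabels {a : L} {t : Fin n} :
    t ∈ D.upLabels a ↔ ∃ z, a ⋖ z ∧ D.IsLabel a z t := by
  simp [upLabels]

include hD

lemma downLabels_witness (h : t ∈ D.downLabels a) :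
    (a ⊓ D.m t) ⋖ a ∧ D.IsLabel (a ⊓ D.m t) a t ∧ D.j t ≤ a ∧ ¬ a ≤ D.m t := by
  obtain ⟨y, hy, hl⟩ := mem_downLabels.1 h
  have hinf : a ⊓ D.m t = y := main_inf hD hy hl
  rw [hinf]
  exact ⟨hy, hl, main_j_le_z hD hy hl, main_not_le_m hD hy hl⟩

lemma upLabels_witness (h : t ∈ D.upLabels a) :
    a ⋖ (a ⊔ D.j t) ∧ D.IsLabel a (a ⊔ D.j t) t ∧ a ≤ D.m t ∧ ¬ D.j t ≤ a := by
  obtain ⟨z, hz, hl⟩ := mem_upLabels.1 h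
  have hsup : a ⊔ D.j t = z := main_sup hD hz hl
  rw [hsup]
  exact ⟨hz, hl, main_le_m hD hz hl, main_j_not_le hD hz hl⟩

lemma mem_downLabels_iff :
    t ∈ D.downLabels a ↔ D.j t ≤ a ∧ (a ⊓ D.m t) ⋖ a := by
  constructor
  · intro h
    obtain ⟨hc, _, hj, _⟩ := downLabels_witness hD h
    exact ⟨hj, hc⟩
  · intro ⟨hj, hc⟩
    refine mem_downLabels.2 ⟨a ⊓ D.m t, hc, label_rev hD hc hj ?_ inf_le_right ?_⟩
    · intro h
      exact j_not_le_m_self D t (h.trans inf_le_right)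
    · intro h
      have : a ⊓ D.m t = a := inf_eq_left.2 h
      rw [this] at hc
      exact absurd rfl (ne_of_lt hc.lt)

lemma mem_upLabels_iff :
    t ∈ D.upLabels a ↔ a ≤ D.m t ∧ a ⋖ (a ⊔ D.j t) := by
  constructor
  · intro h
    obtain ⟨hc, _, hm, _⟩ := upLabels_witness hD h
    exact ⟨hm, hc⟩
  · intro ⟨hm, hc⟩
    refine mem_upLabels.2 ⟨a ⊔ D.j t, hc, label_rev hD hc le_sup_right ?_ hm ?_⟩
    · intro h
      have : a ⊔ D.j t = a := sup_eq_left.2 h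
      rw [this] at hc
      exact absurd rfl (ne_of_lt hc.lt)
    · intro h
      exact j_not_le_m_self D t (le_sup_right.trans h)

lemma sup_downLabels (a : L) : (D.downLabels a).sup D.j = a := by
  have hle : (D.downLabels a).sup D.j ≤ a := Finset.sup_le fun t ht =>
    (downLabels_witness hD ht).2.2.1
  rcases eq_or_lt_of_le hle with h | h
  · exact h
  · exfalso
    obtain ⟨y, hy1, hy2⟩ := exists_covBy_left h
    obtain ⟨t, ht⟩ := exists_isLabel hD hy2
    have htmem : t ∈ D.downLabels a := mem_downLabels.2 ⟨y, hy2, ht⟩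
    exact main_j_not_le hD hy2 ht ((Finset.le_sup htmem).trans hy1)

lemma inf_upLabels (a : L) : (D.upLabels a).inf D.m = a := by
  have hle : a ≤ (D.upLabels a).inf D.m := Finset.le_inf fun t ht =>
    (upLabels_witness hD ht).2.2.1
  rcases eq_or_lt_of_le hle with h | h
  · exact h.symm
  · exfalso
    obtain ⟨z, hz2, hz1⟩ := exists_covBy_right h
    obtain ⟨t, ht⟩ := exists_isLabel hD hz2
    have htmem : t ∈ D.upLabels a := mem_upLabels.2 ⟨z, hz2, ht⟩
    exact main_not_le_m hD hz2 ht (hz1.trans (Finset.inf_le htmem))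

lemma downLabels_injective : Function.Injective D.downLabels := by
  intro a b h
  rw [← sup_downLabels hD a, ← sup_downLabels hD b, h]

lemma upLabels_injective : Function.Injective D.upLabels := by
  intro a b h
  rw [← inf_upLabels hD a, ← inf_upLabels hD b, h]

/-- Any cover above `m t` is `m t ⊔ j t`, with label `t`. -/
lemma cover_above_m {c : L} (h : D.m t ⋖ c) :
    c = D.m t ⊔ D.j t ∧ D.IsLabel (D.m t) c t := by
  obtain ⟨s, hs⟩ := exists_isLabel hD h
  have hinf : c ⊓ D.m s = D.m t := main_inf hD h hs
  rcases (D.m_irr t).2 hinf with h1 | h1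
  · exact absurd h1 (ne_of_gt h.lt)
  · have hst : s = t := D.m_inj h1
    subst hst
    exact ⟨(main_sup hD h hs).symm, hs⟩

lemma cover_below_j {c : L} (h : c ⋖ D.j t) :
    c = D.j t ⊓ D.m t ∧ D.IsLabel c (D.j t) t := by
  obtain ⟨s, hs⟩ := exists_isLabel hD h
  have hsup : c ⊔ D.j s = D.j t := main_sup hD h hs
  rcases (D.j_irr t).2 hsup with h1 | h1
  · exact absurd h1 (ne_of_lt h.lt)
  · have hst : s = t := D.j_inj h1
    subst hst
    exact ⟨(main_inf hD h hs).symm, hs⟩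

lemma m_covBy_sup (t : Fin n) : D.m t ⋖ D.m t ⊔ D.j t := by
  have hne : D.m t < ⊤ := lt_of_le_of_ne le_top (m_ne_top D t)
  obtain ⟨c, hc, _⟩ := exists_covBy_right hne
  obtain ⟨h1, _⟩ := cover_above_m hD hc
  rwa [h1] at hc

lemma j_inf_covBy (t : Fin n) : D.j t ⊓ D.m t ⋖ D.j t := by
  have hne : (⊥ : L) < D.j t := lt_of_le_of_ne bot_le (Ne.symm (j_ne_bot D t))
  obtain ⟨c, hc1, hc⟩ := exists_covBy_left hne
  obtain ⟨h1, _⟩ := cover_below_j hD hc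
  rwa [h1] at hc

lemma mem_downLabels_top_iff : t ∈ D.downLabels ⊤ ↔ D.m t ⋖ ⊤ := by
  rw [mem_downLabels_iff hD]
  constructor
  · intro ⟨_, h⟩
    rwa [top_inf_eq] at h
  · intro h
    exact ⟨le_top, by rwa [top_inf_eq]⟩

lemma mem_upLabels_bot_iff : t ∈ D.upLabels ⊥ ↔ ⊥ ⋖ D.j t := by
  rw [mem_upLabels_iff hD]
  constructor
  · intro ⟨_, h⟩
    rwa [bot_sup_eq] at h
  · intro h
    exact ⟨bot_le, by rwa [bot_sup_eq]⟩

end Membership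

end ExtremalChainData

section SubtypeTransfer

variable {M : Type*} [Lattice M] [Fintype M] [BoundedOrder M]

namespace IicTrans

variable {z : M}

noncomputable instance : Fintype (Set.Iic z) := Fintype.ofFinite _

lemma coe_le_iff {a b : Set.Iic z} : a ≤ b ↔ (a : M) ≤ (b : M) := Iff.rfl

lemma coe_lt_iff {a b : Set.Iic z} : a < b ↔ (a : M) < (b : M) := Iff.rfl

lemma coe_sup (a b : Set.Iic z) : ((a ⊔ b : Set.Iic z) : M) = (a : M) ⊔ (b : M) := rfl

lemma coe_inf (a b : Set.Iic z) : ((a ⊓ b : Set.Iic z) : M) = (a : M) ⊓ (b : M) := rfl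

lemma coe_bot : ((⊥ : Set.Iic z) : M) = ⊥ := rfl

lemma coe_top : ((⊤ : Set.Iic z) : M) = z := rfl

lemma coe_finset_sup {β : Type*} (s : Finset β) (f : β → Set.Iic z) :
    ((s.sup f : Set.Iic z) : M) = s.sup (fun b => (f b : M)) := by
  classical
  induction s using Finset.induction with
  | empty => simp [coe_bot]
  | insert a s' h ih => rw [Finset.sup_insert, Finset.sup_insert, coe_sup, ih]

lemma coe_finset_inf {β : Type*} (s : Finset β) (f : β → Set.Iic z) :
    ((s.inf f : Set.Iic z) : M) = (s.inf (fun b => (f b : M))) ⊓ z := by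
  classical
  induction s using Finset.induction with
  | empty => simp [coe_top]
  | insert a s' h ih =>
      rw [Finset.inf_insert, Finset.inf_insert, coe_inf, ih, ← inf_assoc, inf_right_comm]

lemma supIrred_coe {w : Set.Iic z} (h : SupIrred w) : SupIrred (w : M) := by
  constructor
  · intro hm
    apply h.1
    intro b hb
    exact coe_le_iff.2 (hm (coe_le_iff.1 hb))
  · intro b c hbc
    have hb : b ≤ z := le_trans (hbc ▸ le_sup_left) w.2
    have hc : c ≤ z := le_trans (hbc ▸ le_sup_right) w.2
    have : (⟨b, hb⟩ : Set.Iic z) ⊔ ⟨c, hc⟩ = w := Subtype.ext hbc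
    rcases h.2 this with h1 | h1
    · exact Or.inl (congrArg Subtype.val h1)
    · exact Or.inr (congrArg Subtype.val h1)

lemma supIrred_lift {a : M} (h : SupIrred a) (ha : a ≤ z) :
    SupIrred (⟨a, ha⟩ : Set.Iic z) := by
  constructor
  · intro hm
    apply h.1
    intro b hb
    exact hm (b := ⟨b, hb.trans ha⟩) hb
  · intro b c hbc
    have : (b : M) ⊔ (c : M) = a := congrArg Subtype.val hbc
    rcases h.2 this with h1 | h1
    · exact Or.inl (Subtype.ext h1)
    · exact Or.inr (Subtype.ext h1)

lemma covBy_coe {a b : Set.Iic z} (h : a ⋖ b) : (a : M) ⋖ (b : M) := by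
  refine ⟨coe_lt_iff.1 h.lt, ?_⟩
  intro d hd1 hd2
  have hdz : d ≤ z := hd2.le.trans b.2
  exact h.2 (show a < ⟨d, hdz⟩ from hd1) (show (⟨d, hdz⟩ : Set.Iic z) < b from hd2)

lemma covBy_lift {a b : Set.Iic z} (h : (a : M) ⋖ (b : M)) : a ⋖ b := by
  refine ⟨coe_lt_iff.2 h.lt, ?_⟩
  intro d hd1 hd2
  exact h.2 (coe_lt_iff.1 hd1) (coe_lt_iff.1 hd2)

end IicTrans

end SubtypeTransfer

section SubtypeTransfer2

variable {M : Type*} [Lattice M] [Fintype M] [BoundedOrder M]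

namespace IciTrans

variable {z : M}

noncomputable instance : Fintype (Set.Ici z) := Fintype.ofFinite _

lemma coe_le_iff {a b : Set.Ici z} : a ≤ b ↔ (a : M) ≤ (b : M) := Iff.rfl

lemma coe_lt_iff {a b : Set.Ici z} : a < b ↔ (a : M) < (b : M) := Iff.rfl

lemma coe_sup (a b : Set.Ici z) : ((a ⊔ b : Set.Ici z) : M) = (a : M) ⊔ (b : M) := rfl

lemma coe_inf (a b : Set.Ici z) : ((a ⊓ b : Set.Ici z) : M) = (a : M) ⊓ (b : M) := rfl

lemma coe_bot : ((⊥ : Set.Ici z) : M) = z := rfl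

lemma coe_top : ((⊤ : Set.Ici z) : M) = ⊤ := rfl

lemma coe_finset_inf {β : Type*} (s : Finset β) (f : β → Set.Ici z) :
    ((s.inf f : Set.Ici z) : M) = s.inf (fun b => (f b : M)) := by
  classical
  induction s using Finset.induction with
  | empty => simp [coe_top]
  | insert a s' h ih => rw [Finset.inf_insert, Finset.inf_insert, coe_inf, ih]

lemma coe_finset_sup {β : Type*} (s : Finset β) (f : β → Set.Ici z) :
    ((s.sup f : Set.Ici z) : M) = (s.sup (fun b => (f b : M))) ⊔ z := by
  classical
  induction s using Finset.induction with
  | empty => simp [coe_bot]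
  | insert a s' h ih =>
      rw [Finset.sup_insert, Finset.sup_insert, coe_sup, ih, ← sup_assoc, sup_right_comm]

lemma infIrred_coe {w : Set.Ici z} (h : InfIrred w) : InfIrred (w : M) := by
  constructor
  · intro hm
    apply h.1
    intro b hb
    exact coe_le_iff.2 (hm (coe_le_iff.1 hb))
  · intro b c hbc
    have hb : z ≤ b := le_trans w.2 (hbc ▸ inf_le_left)
    have hc : z ≤ c := le_trans w.2 (hbc ▸ inf_le_right)
    have : (⟨b, hb⟩ : Set.Ici z) ⊓ ⟨c, hc⟩ = w := Subtype.ext hbc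
    rcases h.2 this with h1 | h1
    · exact Or.inl (congrArg Subtype.val h1)
    · exact Or.inr (congrArg Subtype.val h1)

lemma infIrred_lift {a : M} (h : InfIrred a) (ha : z ≤ a) :
    InfIrred (⟨a, ha⟩ : Set.Ici z) := by
  constructor
  · intro hm
    apply h.1
    intro b hb
    exact hm (b := ⟨b, ha.trans hb⟩) hb
  · intro b c hbc
    have : (b : M) ⊓ (c : M) = a := congrArg Subtype.val hbc
    rcases h.2 this with h1 | h1
    · exact Or.inl (Subtype.ext h1)
    · exact Or.inr (Subtype.ext h1)

lemma covBy_coe {a b : Set.Ici z} (h : a ⋖ b) : (a : M) ⋖ (b : M) := by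
  refine ⟨coe_lt_iff.1 h.lt, ?_⟩
  intro d hd1 hd2
  have hdz : z ≤ d := a.2.trans hd1.le
  exact h.2 (show a < ⟨d, hdz⟩ from hd1) (show (⟨d, hdz⟩ : Set.Ici z) < b from hd2)

lemma covBy_lift {a b : Set.Ici z} (h : (a : M) ⋖ (b : M)) : a ⋖ b := by
  refine ⟨coe_lt_iff.2 h.lt, ?_⟩
  intro d hd1 hd2
  exact h.2 (coe_lt_iff.1 hd1) (coe_lt_iff.1 hd2)

end IciTrans

end SubtypeTransfer2

namespace ExtremalChainData

open scoped Classical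

variable {L : Type*} [Lattice L] [Fintype L] [BoundedOrder L] {n : ℕ}
variable (D : ExtremalChainData L n)

section LowerDefs

noncomputable def lowSet (z : L) : Finset (Fin n) :=
  Finset.univ.filter fun t => D.j t ≤ z

noncomputable def lowCard (z : L) : ℕ := (D.lowSet z).card

noncomputable def lowE (z : L) (p : Fin (D.lowCard z)) : Fin n :=
  ((D.lowSet z).orderIsoOfFin rfl p : Fin n)

variable {D}

lemma mem_lowSet {z : L} {t : Fin n} : t ∈ D.lowSet z ↔ D.j t ≤ z := by
  simp [lowSet]

lemma lowE_mem {z : L} (p : Fin (D.lowCard z)) : D.lowE z p ∈ D.lowSet z :=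
  ((D.lowSet z).orderIsoOfFin rfl p).2

lemma j_lowE_le {z : L} (p : Fin (D.lowCard z)) : D.j (D.lowE z p) ≤ z :=
  mem_lowSet.1 (lowE_mem p)

lemma lowE_strictMono {z : L} : StrictMono (D.lowE z) := fun p q h =>
  ((D.lowSet z).orderIsoOfFin rfl).strictMono h

lemma lowE_lt_iff {z : L} {p q : Fin (D.lowCard z)} :
    D.lowE z p < D.lowE z q ↔ p < q := by
  constructor
  · intro h
    by_contra hle
    push_neg at hle
    rcases eq_or_lt_of_le hle with h1 | h1
    · rw [h1] at h; exact lt_irrefl _ h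
    · exact absurd (lowE_strictMono h1) (not_lt_of_gt h)
  · exact fun h => lowE_strictMono h

lemma lowE_inj {z : L} : Function.Injective (D.lowE z) :=
  lowE_strictMono.injective

lemma lowE_surj {z : L} {t : Fin n} (ht : t ∈ D.lowSet z) :
    ∃ p, D.lowE z p = t := by
  obtain ⟨p, hp⟩ := ((D.lowSet z).orderIsoOfFin rfl).surjective ⟨t, ht⟩
  exact ⟨p, congrArg Subtype.val hp⟩

end LowerDefs

section LowerLemmas

variable {D} {z : L} (hD : D.IsTrim)
include hD

lemma low_stab {t : Fin n} (ht : ¬ D.j t ≤ z) :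
    z ⊓ D.X ((t : ℕ) + 1) = z ⊓ D.X t := by
  refine le_antisymm ?_ (inf_le_inf_left z (X_mono D (Nat.le_succ _)))
  have hcov := X_covBy D t.isLt
  rcases hcov.eq_or_eq (le_sup_right : D.X t ≤ (z ⊓ D.X ((t : ℕ) + 1)) ⊔ D.X t)
      (sup_le inf_le_right (X_mono D (Nat.le_succ _))) with h | h
  · have : z ⊓ D.X ((t : ℕ) + 1) ≤ D.X t := le_sup_left.trans h.le
    exact le_inf inf_le_left this
  · exfalso
    exact ht ((j_le_of_complement hD inf_le_right h).trans inf_le_left)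

lemma low_stab_range {s u : ℕ} (hsu : s ≤ u)
    (hgap : ∀ t : Fin n, s ≤ (t : ℕ) → (t : ℕ) < u → ¬ D.j t ≤ z) :
    z ⊓ D.X u = z ⊓ D.X s := by
  induction u, hsu using Nat.le_induction with
  | base => rfl
  | succ u hsu ih =>
      by_cases hu : u < n
      · rw [show z ⊓ D.X (u + 1) = z ⊓ D.X u from
          low_stab hD (t := ⟨u, hu⟩) (hgap ⟨u, hu⟩ hsu (Nat.lt_succ_self u))]
        exact ih fun t h1 h2 => hgap t h1 (by omega)
      · rw [show D.X (u + 1) = D.X u from by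
          rw [X_top D (by omega), X_top D (by omega)]]
        exact ih fun t h1 h2 => hgap t h1 (by omega)

lemma low_jump {t : Fin n} (ht : D.j t ≤ z) :
    z ⊓ D.X t < z ⊓ D.X ((t : ℕ) + 1) := by
  refine lt_of_le_of_ne (inf_le_inf_left z (X_mono D (Nat.le_succ _))) ?_
  intro h
  have : D.j t ≤ z ⊓ D.X t := h ▸ le_inf ht (j_le_X D (Nat.lt_succ_self _))
  exact j_not_le_X D le_rfl (this.trans inf_le_right)

lemma low_supform {t : Fin n} (ht : D.j t ≤ z) :
    z ⊓ D.X ((t : ℕ) + 1) = (z ⊓ D.X t) ⊔ D.j t := by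
  set u := z ⊓ D.X ((t : ℕ) + 1) with hu
  set v := (z ⊓ D.X t) ⊔ D.j t with hv
  have hvu : v ≤ u := sup_le
    (le_inf inf_le_left ((inf_le_right).trans (X_mono D (Nat.le_succ _))))
    (le_inf ht (j_le_X D (Nat.lt_succ_self _)))
  refine le_antisymm ?_ hvu
  have h1 : u ≤ v ⊔ D.X t := by
    calc u ≤ D.X ((t : ℕ) + 1) := inf_le_right
    _ = D.X t ⊔ D.j t := X_succ_sup D t
    _ ≤ v ⊔ D.X t := by
        refine sup_le le_sup_right ?_
        exact le_trans (le_sup_right : D.j t ≤ (z ⊓ D.X t) ⊔ D.j t) le_sup_left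
  have h2 : (v ⊔ D.X t) ⊓ u = v ⊔ (D.X t ⊓ u) := lm_eq hD hvu _
  have h3 : D.X t ⊓ u ≤ v := by
    have : D.X t ⊓ u ≤ z ⊓ D.X t := le_inf (inf_le_right.trans inf_le_left) inf_le_left
    exact this.trans le_sup_left
  calc u = (v ⊔ D.X t) ⊓ u := (inf_eq_right.2 h1).symm
  _ = v ⊔ (D.X t ⊓ u) := h2
  _ ≤ v := sup_le le_rfl h3

end LowerLemmas

section LowerVal

variable {D}

lemma z_decomp (z : L) : (D.lowSet z).sup D.j = z := by
  refine le_antisymm (Finset.sup_le fun t ht => mem_lowSet.1 ht) ?_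
  conv_lhs => rw [← sup_irreds_eq z]
  refine Finset.sup_le fun v hv => ?_
  simp only [Finset.mem_filter, Finset.mem_univ, true_and] at hv
  obtain ⟨t, ht⟩ := D.j_surj v hv.1
  exact Finset.le_sup (f := D.j) (mem_lowSet.2 (ht ▸ hv.2)) |>.trans' (le_of_eq ht.symm)

noncomputable def lowBnd (D : ExtremalChainData L n) (z : L) (p : ℕ) : ℕ :=
  if h : 0 < p ∧ p ≤ D.lowCard z then (D.lowE z ⟨p - 1, by omega⟩ : ℕ) + 1 else 0

lemma lowBnd_zero {z : L} : D.lowBnd z 0 = 0 := by simp [lowBnd]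

lemma lowBnd_succ {z : L} {p : ℕ} (hp : p < D.lowCard z) :
    D.lowBnd z (p + 1) = (D.lowE z ⟨p, hp⟩ : ℕ) + 1 := by
  have he : (⟨p + 1 - 1, by omega⟩ : Fin (D.lowCard z)) = ⟨p, hp⟩ :=
    Fin.ext (Nat.succ_sub_one p)
  simp only [lowBnd, dif_pos (by omega : 0 < p + 1 ∧ p + 1 ≤ D.lowCard z), he]

lemma lowBnd_eq_of_pos {z : L} {p : ℕ} (h0 : 0 < p) (hp : p ≤ D.lowCard z) :
    D.lowBnd z p = (D.lowE z ⟨p - 1, by omega⟩ : ℕ) + 1 := by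
  simp only [lowBnd, dif_pos (⟨h0, hp⟩ : 0 < p ∧ p ≤ D.lowCard z)]

lemma lowE_mono_val {z : L} {p q : Fin (D.lowCard z)} (h : (p : ℕ) ≤ (q : ℕ)) :
    (D.lowE z p : ℕ) ≤ (D.lowE z q : ℕ) :=
  Fin.le_def.1 (lowE_strictMono.monotone (Fin.le_def.2 h))

lemma lowE_lt_val {z : L} {p q : Fin (D.lowCard z)} (h : (p : ℕ) < (q : ℕ)) :
    (D.lowE z p : ℕ) < (D.lowE z q : ℕ) :=
  Fin.lt_def.1 (lowE_strictMono (Fin.lt_def.2 h))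

variable (hD : D.IsTrim) {z : L}
include hD

/-- stabilization from `lowBnd p` up to `lowE p`. -/
lemma low_bnd_stab {p : ℕ} (hp : p < D.lowCard z) :
    z ⊓ D.X (D.lowE z ⟨p, hp⟩) = z ⊓ D.X (D.lowBnd z p) := by
  have hle : D.lowBnd z p ≤ (D.lowE z ⟨p, hp⟩ : ℕ) := by
    rcases Nat.eq_zero_or_pos p with h0 | h0
    · subst h0; rw [lowBnd_zero]; omega
    · rw [lowBnd_eq_of_pos h0 hp.le]
      have := lowE_lt_val (p := ⟨p - 1, by omega⟩) (q := ⟨p, hp⟩) (show p - 1 < p by omega)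
      omega
  refine low_stab_range hD hle ?_
  intro t h1 h2 hjt
  obtain ⟨q, hq⟩ := lowE_surj (mem_lowSet.2 hjt)
  have hqp : (D.lowE z q : ℕ) < (D.lowE z ⟨p, hp⟩ : ℕ) := by rw [hq]; exact h2
  have hval : ((⟨p, hp⟩ : Fin (D.lowCard z)) : ℕ) = p := rfl
  have hq1 : (q : ℕ) < p := by
    by_contra hge
    exact absurd (lowE_mono_val (p := ⟨p, hp⟩) (q := q) (by omega)) (by omega)
  have : (D.lowE z q : ℕ) < D.lowBnd z p := by
    rw [lowBnd_eq_of_pos (by omega) hp.le]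
    have := lowE_mono_val (p := q) (q := ⟨p - 1, by omega⟩) (show (q : ℕ) ≤ p - 1 by omega)
    omega
  rw [hq] at this
  omega

lemma low_val : ∀ p : ℕ, p ≤ D.lowCard z →
    ((Finset.univ.filter fun q : Fin (D.lowCard z) => (q : ℕ) < p).sup
      (fun q => D.j (D.lowE z q))) = z ⊓ D.X (D.lowBnd z p) := by
  intro p
  induction p with
  | zero =>
      intro _
      have he : (Finset.univ.filter fun q : Fin (D.lowCard z) => (q : ℕ) < 0) = ∅ := by
        ext q; simp
      rw [he, Finset.sup_empty, lowBnd_zero, X_zero, inf_bot_eq]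
  | succ p ih =>
      intro hp1
      have hp : p < D.lowCard z := by omega
      have hsplit : (Finset.univ.filter fun q : Fin (D.lowCard z) => (q : ℕ) < p + 1)
          = insert ⟨p, hp⟩ (Finset.univ.filter fun q : Fin (D.lowCard z) => (q : ℕ) < p) := by
        ext q
        simp only [Finset.mem_filter, Finset.mem_univ, true_and, Finset.mem_insert]
        constructor
        · intro hq
          rcases Nat.lt_succ_iff_lt_or_eq.1 hq with h | h
          · exact Or.inr h
          · exact Or.inl (Fin.ext h)
        · rintro (rfl | hq)
          · exact Nat.lt_succ_self p
          · omega
      rw [hsplit, Finset.sup_insert, ih (by omega), lowBnd_succ hp,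
        low_supform hD (j_lowE_le ⟨p, hp⟩), low_bnd_stab hD hp, sup_comm]

lemma low_top : z ⊓ D.X (D.lowBnd z (D.lowCard z)) = z := by
  rcases Nat.eq_zero_or_pos (D.lowCard z) with h0 | h0
  · have hz : z = ⊥ := by
      rw [← z_decomp z]
      have : D.lowSet z = ∅ := Finset.card_eq_zero.1 h0
      rw [this, Finset.sup_empty]
    rw [h0, lowBnd_zero, X_zero, inf_bot_eq, hz]
  · have hle : z ≤ D.X (D.lowBnd z (D.lowCard z)) := by
      refine le_trans (le_of_eq (z_decomp (D := D) z).symm) ?_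
      refine Finset.sup_le fun t ht => ?_
      obtain ⟨q, hq⟩ := lowE_surj ht
      have hmono := lowE_mono_val (p := q) (q := ⟨D.lowCard z - 1, by omega⟩)
        (show (q : ℕ) ≤ D.lowCard z - 1 by have := q.isLt; omega)
      rw [lowBnd_eq_of_pos h0 le_rfl]
      refine le_trans ?_ (X_mono D (show (t:ℕ)+1 ≤ (D.lowE z ⟨D.lowCard z - 1, by omega⟩ : ℕ) + 1 by
        rw [← hq]; omega))
      exact j_le_X D (Nat.lt_succ_self _)
    exact inf_eq_left.2 hle

lemma low_infval : ∀ p : ℕ, p ≤ D.lowCard z →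
    ((Finset.univ.filter fun q : Fin (D.lowCard z) => p ≤ (q : ℕ)).inf
      (fun q => z ⊓ D.m (D.lowE z q))) ⊓ z = z ⊓ D.X (D.lowBnd z p) := by
  intro p hp
  obtain ⟨k, hk⟩ : ∃ k, D.lowCard z - p = k := ⟨_, rfl⟩
  induction k generalizing p with
  | zero =>
      have hpr : p = D.lowCard z := by omega
      subst hpr
      rw [low_top hD]
      have hempty : (Finset.univ.filter fun q : Fin (D.lowCard z) => D.lowCard z ≤ (q : ℕ)) = ∅ := by
        ext q; simp only [Finset.mem_filter, Finset.mem_univ, true_and, Finset.notMem_empty,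
          iff_false]
        have := q.isLt; omega
      rw [hempty, Finset.inf_empty, top_inf_eq]
  | succ k ihk =>
      have hp2 : p < D.lowCard z := by omega
      have hsplit : (Finset.univ.filter fun q : Fin (D.lowCard z) => p ≤ (q : ℕ))
          = insert ⟨p, hp2⟩ (Finset.univ.filter fun q : Fin (D.lowCard z) => p + 1 ≤ (q : ℕ)) := by
        ext q
        simp only [Finset.mem_filter, Finset.mem_univ, true_and, Finset.mem_insert]
        constructor
        · intro hq
          rcases Nat.eq_or_lt_of_le hq with h | h
          · exact Or.inl (Fin.ext h.symm)
          · exact Or.inr h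
        · rintro (rfl | hq)
          · exact le_rfl
          · omega
      rw [hsplit, Finset.inf_insert]
      have hrec := ihk (p + 1) (by omega) (by omega)
      calc (z ⊓ D.m (D.lowE z ⟨p, hp2⟩)) ⊓
            ((Finset.univ.filter fun q : Fin (D.lowCard z) => p + 1 ≤ (q : ℕ)).inf
              (fun q => z ⊓ D.m (D.lowE z q))) ⊓ z
          = (z ⊓ D.m (D.lowE z ⟨p, hp2⟩)) ⊓
            (((Finset.univ.filter fun q : Fin (D.lowCard z) => p + 1 ≤ (q : ℕ)).inf
              (fun q => z ⊓ D.m (D.lowE z q))) ⊓ z) := by rw [inf_assoc]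
      _ = (z ⊓ D.m (D.lowE z ⟨p, hp2⟩)) ⊓ (z ⊓ D.X (D.lowBnd z (p + 1))) := by rw [hrec]
      _ = z ⊓ (D.m (D.lowE z ⟨p, hp2⟩) ⊓ D.X ((D.lowE z ⟨p, hp2⟩ : ℕ) + 1)) := by
            rw [lowBnd_succ hp2]
            rw [inf_inf_inf_comm, inf_idem]
      _ = z ⊓ D.X (D.lowE z ⟨p, hp2⟩) := by rw [m_inf_X]
      _ = z ⊓ D.X (D.lowBnd z p) := low_bnd_stab hD hp2

end LowerVal

end ExtremalChainData

namespace ExtremalChainData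

open scoped Classical

variable {L : Type*} [Lattice L] [Fintype L] [BoundedOrder L] {n : ℕ}
variable {D : ExtremalChainData L n} {z : L}

section LowerAssemble

variable (hD : D.IsTrim)
include hD

lemma low_x_strictMono : StrictMono (fun p : Fin (D.lowCard z + 1) =>
    (⟨z ⊓ D.X (D.lowBnd z p), inf_le_left⟩ : Set.Iic z)) := by
  rw [Fin.strictMono_iff_lt_succ]
  intro i
  show (⟨z ⊓ D.X (D.lowBnd z ((i.castSucc : Fin (D.lowCard z + 1)) : ℕ)), _⟩ : Set.Iic z)
      < ⟨z ⊓ D.X (D.lowBnd z ((i.succ : Fin (D.lowCard z + 1)) : ℕ)), _⟩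
  rw [IicTrans.coe_lt_iff]
  show z ⊓ D.X (D.lowBnd z (i : ℕ)) < z ⊓ D.X (D.lowBnd z ((i : ℕ) + 1))
  have h1 : z ⊓ D.X (D.lowBnd z (i : ℕ)) = z ⊓ D.X (D.lowE z i) := by
    have := low_bnd_stab hD (z := z) i.isLt
    simpa [Fin.eta] using this.symm
  rw [h1, lowBnd_succ i.isLt]
  simpa [Fin.eta] using low_jump hD (j_lowE_le i)

omit hD in
lemma low_irred_card :
    ((Finset.univ : Finset (Set.Iic z)).filter fun w => SupIrred w).card ≤ D.lowCard z := by
  by_cases hne : ((Finset.univ : Finset (Set.Iic z)).filter fun w => SupIrred w).Nonempty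
  case neg =>
    rw [Finset.not_nonempty_iff_eq_empty] at hne
    simp [hne]
  · obtain ⟨w0, hw0⟩ := hne
    have hw0' : SupIrred w0 := by simpa using hw0
    have hch : ∀ w : Set.Iic z, SupIrred w → ∃ t : Fin n, D.j t = (w : L) :=
      fun w hw => D.j_surj _ (IicTrans.supIrred_coe hw)
    set g : Set.Iic z → Fin n := fun w =>
      if h : SupIrred w then (hch w h).choose else (hch w0 hw0').choose with hg
    have hgval : ∀ w : Set.Iic z, SupIrred w → D.j (g w) = (w : L) := by
      intro w hw
      simp only [hg, dif_pos hw]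
      exact (hch w hw).choose_spec
    refine Finset.card_le_card_of_injOn g ?_ ?_
    · intro w hw
      simp only [Finset.mem_coe, Finset.mem_filter, Finset.mem_univ, true_and] at hw
      exact mem_lowSet.2 ((hgval w hw) ▸ w.2)
    · intro w hw w' hw' heq
      simp only [Finset.coe_filter, Finset.mem_univ, true_and, Set.mem_setOf_eq] at hw hw'
      apply Subtype.ext
      rw [← hgval w hw, ← hgval w' hw', heq]

lemma low_m_classify (w : Set.Iic z) (hw : InfIrred w) :
    ∃ t, t ∈ D.lowSet z ∧ (w : L) = z ⊓ D.m t := by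
  have hwtop : w < ⊤ := lt_of_le_of_ne le_top (by rintro rfl; exact hw.1 isMax_top)
  obtain ⟨c, hc, _⟩ := exists_covBy_right hwtop
  have hcL : (w : L) ⋖ (c : L) := IicTrans.covBy_coe hc
  obtain ⟨t, ht⟩ := exists_isLabel hD hcL
  have hwm : (w : L) = (c : L) ⊓ D.m t := (main_inf hD hcL ht).symm
  have htmem : t ∈ D.lowSet z := mem_lowSet.2 ((main_j_le_z hD hcL ht).trans c.2)
  refine ⟨t, htmem, ?_⟩
  have hle : (w : L) ≤ z ⊓ D.m t := le_inf w.2 (le_of_eq_of_le hwm inf_le_right)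
  rcases eq_or_lt_of_le hle with h | h
  · exact h
  · exfalso
    set s : Set.Iic z := ⟨z ⊓ D.m t, inf_le_left⟩ with hs
    have hws : w < s := h
    have hcs : c ≤ s := by
      have h1 : w ≤ s ⊓ c := le_inf hws.le hc.lt.le
      rcases hc.eq_or_eq h1 inf_le_right with h2 | h2
      · rcases hw.2 h2 with h3 | h3
        · exact absurd h3 (ne_of_gt hws)
        · exact absurd h3 (ne_of_gt hc.lt)
      · exact h2 ▸ inf_le_left
    exact main_not_le_m hD hcL ht ((IicTrans.coe_le_iff.1 hcs).trans inf_le_right)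

lemma low_m_block :
    (∀ t ∈ D.lowSet z, InfIrred (⟨z ⊓ D.m t, inf_le_left⟩ : Set.Iic z)) ∧
    Set.InjOn (fun t => (⟨z ⊓ D.m t, inf_le_left⟩ : Set.Iic z)) (D.lowSet z) := by
  classical
  set f : Fin n → Set.Iic z := fun t => ⟨z ⊓ D.m t, inf_le_left⟩ with hf
  set MI : Finset (Set.Iic z) := Finset.univ.filter (fun w => InfIrred w) with hMI
  set IMG : Finset (Set.Iic z) := (D.lowSet z).image f with hIMG
  have hsub : MI ⊆ IMG := by
    intro w hw
    simp only [hMI, Finset.mem_filter, Finset.mem_univ, true_and] at hw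
    obtain ⟨t, ht1, ht2⟩ := low_m_classify hD w hw
    exact Finset.mem_image.2 ⟨t, ht1, Subtype.ext ht2.symm⟩
  have hchain : D.lowCard z ≤ MI.card :=
    chain_le_card_infIrred (fun p : Fin (D.lowCard z + 1) =>
      (⟨z ⊓ D.X (D.lowBnd z p), inf_le_left⟩ : Set.Iic z)) (low_x_strictMono hD)
  have himg_le : IMG.card ≤ (D.lowSet z).card := Finset.card_image_le
  have heq : MI = IMG := Finset.eq_of_subset_of_card_le hsub (himg_le.trans hchain)
  have hcard : IMG.card = (D.lowSet z).card := le_antisymm Finset.card_image_le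
    (le_trans hchain (le_of_eq (congrArg Finset.card heq)))
  constructor
  · intro t ht
    have hmem : f t ∈ IMG := Finset.mem_image_of_mem f ht
    rw [← heq] at hmem
    simpa [hMI] using hmem
  · exact Finset.injOn_of_card_image_eq hcard

/-- The induced trim data on the lower interval `[⊥, z]`. -/
noncomputable def lowData (hD : D.IsTrim) (z : L) :
    ExtremalChainData (Set.Iic z) (D.lowCard z) where
  x := fun p => ⟨z ⊓ D.X (D.lowBnd z p), inf_le_left⟩
  x_strictMono := low_x_strictMono hD
  x_bot := by
    apply Subtype.ext
    show z ⊓ D.X (D.lowBnd z ((0 : Fin (D.lowCard z + 1)) : ℕ)) = ((⊥ : Set.Iic z) : L)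
    rw [IicTrans.coe_bot]
    simp [lowBnd_zero, X_zero]
  x_top := by
    apply Subtype.ext
    show z ⊓ D.X (D.lowBnd z ((Fin.last (D.lowCard z)) : ℕ)) = ((⊤ : Set.Iic z) : L)
    rw [IicTrans.coe_top, Fin.val_last]
    exact low_top hD
  maxlen := fun m c hc => (chain_le_card_supIrred c hc).trans low_irred_card
  j := fun q => ⟨D.j (D.lowE z q), j_lowE_le q⟩
  m := fun q => ⟨z ⊓ D.m (D.lowE z q), inf_le_left⟩
  j_irr := fun q => IicTrans.supIrred_lift (D.j_irr _) _
  m_irr := fun q => (low_m_block hD).1 _ (lowE_mem q)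
  j_inj := fun q q' h => lowE_inj (D.j_inj (congrArg Subtype.val h))
  m_inj := fun q q' h =>
    lowE_inj ((low_m_block hD).2 (lowE_mem q) (lowE_mem q') h)
  j_surj := fun a ha => by
    obtain ⟨t, ht⟩ := D.j_surj _ (IicTrans.supIrred_coe ha)
    obtain ⟨q, hq⟩ := lowE_surj (mem_lowSet.2 (ht ▸ a.2))
    exact ⟨q, Subtype.ext (show D.j (D.lowE z q) = (a : L) by rw [hq, ht])⟩
  m_surj := fun a ha => by
    obtain ⟨t, ht1, ht2⟩ := low_m_classify hD a ha
    obtain ⟨q, hq⟩ := lowE_surj ht1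
    exact ⟨q, Subtype.ext (show z ⊓ D.m (D.lowE z q) = (a : L) by rw [hq, ← ht2])⟩
  x_eq_sup := fun i => by
    apply Subtype.ext
    rw [IicTrans.coe_finset_sup]
    exact (low_val hD i (by omega)).symm
  x_eq_inf := fun i => by
    apply Subtype.ext
    rw [IicTrans.coe_finset_inf]
    exact (low_infval hD i (by omega)).symm

end LowerAssemble

end ExtremalChainData

namespace ExtremalChainData

open scoped Classical

variable {L : Type*} [Lattice L] [Fintype L] [BoundedOrder L] {n : ℕ}
variable (D : ExtremalChainData L n)

section UpperDefs

noncomputable def uppSet (y : L) : Finset (Fin n) :=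
  Finset.univ.filter fun t => y ≤ D.m t

noncomputable def uppCard (y : L) : ℕ := (D.uppSet y).card

noncomputable def uppE (y : L) (p : Fin (D.uppCard y)) : Fin n :=
  ((D.uppSet y).orderIsoOfFin rfl p : Fin n)

variable {D}

lemma mem_uppSet {y : L} {t : Fin n} : t ∈ D.uppSet y ↔ y ≤ D.m t := by
  simp [uppSet]

lemma uppE_mem {y : L} (p : Fin (D.uppCard y)) : D.uppE y p ∈ D.uppSet y :=
  ((D.uppSet y).orderIsoOfFin rfl p).2

lemma le_m_uppE {y : L} (p : Fin (D.uppCard y)) : y ≤ D.m (D.uppE y p) :=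
  mem_uppSet.1 (uppE_mem p)

lemma uppE_strictMono {y : L} : StrictMono (D.uppE y) := fun p q h =>
  ((D.uppSet y).orderIsoOfFin rfl).strictMono h

lemma uppE_inj {y : L} : Function.Injective (D.uppE y) :=
  uppE_strictMono.injective

lemma uppE_surj {y : L} {t : Fin n} (ht : t ∈ D.uppSet y) :
    ∃ p, D.uppE y p = t := by
  obtain ⟨p, hp⟩ := ((D.uppSet y).orderIsoOfFin rfl).surjective ⟨t, ht⟩
  exact ⟨p, congrArg Subtype.val hp⟩

lemma uppE_mono_val {y : L} {p q : Fin (D.uppCard y)} (h : (p : ℕ) ≤ (q : ℕ)) :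
    (D.uppE y p : ℕ) ≤ (D.uppE y q : ℕ) :=
  Fin.le_def.1 (uppE_strictMono.monotone (Fin.le_def.2 h))

lemma uppE_lt_val {y : L} {p q : Fin (D.uppCard y)} (h : (p : ℕ) < (q : ℕ)) :
    (D.uppE y p : ℕ) < (D.uppE y q : ℕ) :=
  Fin.lt_def.1 (uppE_strictMono (Fin.lt_def.2 h))

end UpperDefs

section UpperLemmas

variable {D} {y : L} (hD : D.IsTrim)
include hD

lemma upp_stab {t : Fin n} (ht : ¬ y ≤ D.m t) :
    y ⊔ D.X ((t : ℕ) + 1) = y ⊔ D.X t := by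
  refine le_antisymm ?_ (sup_le_sup_left (X_mono D (Nat.le_succ _)) y)
  have hcov := X_covBy D t.isLt
  rcases hcov.eq_or_eq (le_inf (le_sup_right : D.X t ≤ (y ⊔ D.X t)) (X_mono D (Nat.le_succ _))
        : D.X t ≤ (y ⊔ D.X t) ⊓ D.X ((t : ℕ) + 1))
      (inf_le_right : (y ⊔ D.X t) ⊓ D.X ((t : ℕ) + 1) ≤ _) with h | h
  · exfalso
    exact ht (le_sup_left.trans (le_m_of_complement hD le_sup_right h))
  · have : D.X ((t : ℕ) + 1) ≤ y ⊔ D.X t := h ▸ inf_le_left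
    exact sup_le le_sup_left this

lemma upp_stab_range {s u : ℕ} (hsu : s ≤ u)
    (hgap : ∀ t : Fin n, s ≤ (t : ℕ) → (t : ℕ) < u → ¬ y ≤ D.m t) :
    y ⊔ D.X u = y ⊔ D.X s := by
  induction u, hsu using Nat.le_induction with
  | base => rfl
  | succ u hsu ih =>
      by_cases hu : u < n
      · rw [show y ⊔ D.X (u + 1) = y ⊔ D.X u from
          upp_stab hD (t := ⟨u, hu⟩) (hgap ⟨u, hu⟩ hsu (Nat.lt_succ_self u))]
        exact ih fun t h1 h2 => hgap t h1 (by omega)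
      · rw [show D.X (u + 1) = D.X u from by
          rw [X_top D (by omega), X_top D (by omega)]]
        exact ih fun t h1 h2 => hgap t h1 (by omega)

lemma upp_jump {t : Fin n} (ht : y ≤ D.m t) :
    y ⊔ D.X t < y ⊔ D.X ((t : ℕ) + 1) := by
  refine lt_of_le_of_ne (sup_le_sup_left (X_mono D (Nat.le_succ _)) y) ?_
  intro h
  have h1 : D.X ((t : ℕ) + 1) ≤ D.m t := by
    calc D.X ((t : ℕ) + 1) ≤ y ⊔ D.X ((t : ℕ) + 1) := le_sup_right
    _ = y ⊔ D.X t := h.symm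
    _ ≤ D.m t := sup_le ht (X_le_m D le_rfl)
  exact not_X_le_m D (Nat.lt_succ_self _) h1

lemma upp_infform {t : Fin n} (ht : y ≤ D.m t) :
    y ⊔ D.X t = (y ⊔ D.X ((t : ℕ) + 1)) ⊓ D.m t := by
  set u := y ⊔ D.X t with hu
  set v := (y ⊔ D.X ((t : ℕ) + 1)) ⊓ D.m t with hv
  have huv : u ≤ v := sup_le
    (le_inf (le_sup_left) ht)
    (le_inf ((X_mono D (Nat.le_succ _)).trans le_sup_right) (X_le_m D le_rfl))
  refine le_antisymm huv ?_
  have h1 : v ⊓ D.X ((t : ℕ) + 1) ≤ u := by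
    have : v ⊓ D.X ((t : ℕ) + 1) ≤ D.m t ⊓ D.X ((t : ℕ) + 1) :=
      inf_le_inf_right _ inf_le_right
    rw [m_inf_X D t] at this
    exact this.trans le_sup_right
  have h2 : (y ⊔ D.X ((t : ℕ) + 1)) ⊓ v = y ⊔ (D.X ((t : ℕ) + 1) ⊓ v) :=
    lm_eq hD (le_inf le_sup_left ht : y ≤ v) _
  have h3 : v = y ⊔ (D.X ((t : ℕ) + 1) ⊓ v) := by
    rw [← h2]
    exact (inf_eq_right.2 inf_le_left).symm
  calc v = y ⊔ (D.X ((t : ℕ) + 1) ⊓ v) := h3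
  _ ≤ u := sup_le le_sup_left (le_trans (le_of_eq (inf_comm _ _)) h1)

end UpperLemmas

section UpperVal

variable {D}

lemma y_decomp (y : L) : (D.uppSet y).inf D.m = y := by
  refine le_antisymm ?_ (Finset.le_inf fun t ht => mem_uppSet.1 ht)
  conv_rhs => rw [← inf_irreds_eq y]
  refine Finset.le_inf fun v hv => ?_
  simp only [Finset.mem_filter, Finset.mem_univ, true_and] at hv
  obtain ⟨t, ht⟩ := D.m_surj v hv.1
  exact le_of_le_of_eq (Finset.inf_le (f := D.m) (mem_uppSet.2 (ht ▸ hv.2))) ht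

noncomputable def uppBnd (D : ExtremalChainData L n) (y : L) (p : ℕ) : ℕ :=
  if h : 0 < p ∧ p ≤ D.uppCard y then (D.uppE y ⟨p - 1, by omega⟩ : ℕ) + 1 else 0

lemma uppBnd_zero {y : L} : D.uppBnd y 0 = 0 := by simp [uppBnd]

lemma uppBnd_succ {y : L} {p : ℕ} (hp : p < D.uppCard y) :
    D.uppBnd y (p + 1) = (D.uppE y ⟨p, hp⟩ : ℕ) + 1 := by
  have he : (⟨p + 1 - 1, by omega⟩ : Fin (D.uppCard y)) = ⟨p, hp⟩ :=
    Fin.ext (Nat.succ_sub_one p)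
  simp only [uppBnd, dif_pos (by omega : 0 < p + 1 ∧ p + 1 ≤ D.uppCard y), he]

lemma uppBnd_eq_of_pos {y : L} {p : ℕ} (h0 : 0 < p) (hp : p ≤ D.uppCard y) :
    D.uppBnd y p = (D.uppE y ⟨p - 1, by omega⟩ : ℕ) + 1 := by
  simp only [uppBnd, dif_pos (⟨h0, hp⟩ : 0 < p ∧ p ≤ D.uppCard y)]

variable (hD : D.IsTrim) {y : L}
include hD

lemma upp_bnd_stab {p : ℕ} (hp : p < D.uppCard y) :
    y ⊔ D.X (D.uppE y ⟨p, hp⟩) = y ⊔ D.X (D.uppBnd y p) := by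
  have hle : D.uppBnd y p ≤ (D.uppE y ⟨p, hp⟩ : ℕ) := by
    rcases Nat.eq_zero_or_pos p with h0 | h0
    · subst h0; rw [uppBnd_zero]; omega
    · rw [uppBnd_eq_of_pos h0 hp.le]
      have := uppE_lt_val (p := ⟨p - 1, by omega⟩) (q := ⟨p, hp⟩) (show p - 1 < p by omega)
      omega
  refine upp_stab_range hD hle ?_
  intro t h1 h2 hmt
  obtain ⟨q, hq⟩ := uppE_surj (mem_uppSet.2 hmt)
  have hqp : (D.uppE y q : ℕ) < (D.uppE y ⟨p, hp⟩ : ℕ) := by rw [hq]; exact h2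
  have hval : ((⟨p, hp⟩ : Fin (D.uppCard y)) : ℕ) = p := rfl
  have hq1 : (q : ℕ) < p := by
    by_contra hge
    exact absurd (uppE_mono_val (p := ⟨p, hp⟩) (q := q) (by omega)) (by omega)
  have : (D.uppE y q : ℕ) < D.uppBnd y p := by
    rw [uppBnd_eq_of_pos (by omega) hp.le]
    have := uppE_mono_val (p := q) (q := ⟨p - 1, by omega⟩) (show (q : ℕ) ≤ p - 1 by omega)
    omega
  rw [hq] at this
  omega

lemma upp_top : y ⊔ D.X (D.uppBnd y (D.uppCard y)) = ⊤ := by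
  have hgap : ∀ t : Fin n, D.uppBnd y (D.uppCard y) ≤ (t : ℕ) → (t : ℕ) < n → ¬ y ≤ D.m t := by
    intro t h1 _ hmt
    obtain ⟨q, hq⟩ := uppE_surj (mem_uppSet.2 hmt)
    have h0 : 0 < D.uppCard y := by
      rcases Nat.eq_zero_or_pos (D.uppCard y) with h | h
      · have := q.isLt; omega
      · exact h
    have := uppE_mono_val (p := q) (q := ⟨D.uppCard y - 1, by omega⟩)
      (show (q : ℕ) ≤ D.uppCard y - 1 by have := q.isLt; omega)
    rw [uppBnd_eq_of_pos h0 le_rfl] at h1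
    rw [hq] at this
    omega
  calc y ⊔ D.X (D.uppBnd y (D.uppCard y)) = y ⊔ D.X n := by
        rcases le_or_gt (D.uppBnd y (D.uppCard y)) n with h | h
        · exact (upp_stab_range hD h (fun t ht1 ht2 => hgap t ht1 t.isLt)).symm
        · rw [X_top D le_rfl, X_top D h.le]
  _ = ⊤ := by rw [X_top D le_rfl, sup_top_eq]

lemma upp_val : ∀ p : ℕ, p ≤ D.uppCard y →
    ((Finset.univ.filter fun q : Fin (D.uppCard y) => (q : ℕ) < p).sup
      (fun q => y ⊔ D.j (D.uppE y q))) ⊔ y = y ⊔ D.X (D.uppBnd y p) := by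
  intro p
  induction p with
  | zero =>
      intro _
      have he : (Finset.univ.filter fun q : Fin (D.uppCard y) => (q : ℕ) < 0) = ∅ := by
        ext q; simp
      rw [he, Finset.sup_empty, uppBnd_zero, X_zero, sup_bot_eq, bot_sup_eq]
  | succ p ih =>
      intro hp1
      have hp : p < D.uppCard y := by omega
      have hsplit : (Finset.univ.filter fun q : Fin (D.uppCard y) => (q : ℕ) < p + 1)
          = insert ⟨p, hp⟩ (Finset.univ.filter fun q : Fin (D.uppCard y) => (q : ℕ) < p) := by
        ext q
        simp only [Finset.mem_filter, Finset.mem_univ, true_and, Finset.mem_insert]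
        constructor
        · intro hq
          rcases Nat.lt_succ_iff_lt_or_eq.1 hq with h | h
          · exact Or.inr h
          · exact Or.inl (Fin.ext h)
        · rintro (rfl | hq)
          · exact Nat.lt_succ_self p
          · omega
      rw [hsplit, Finset.sup_insert, uppBnd_succ hp, sup_assoc, ih (by omega),
        ← upp_bnd_stab hD hp, X_succ_sup D (D.uppE y ⟨p, hp⟩),
        sup_sup_sup_comm, sup_idem, sup_comm (D.j (D.uppE y ⟨p, hp⟩)) (D.X _)]

lemma upp_infval : ∀ p : ℕ, p ≤ D.uppCard y →
    ((Finset.univ.filter fun q : Fin (D.uppCard y) => p ≤ (q : ℕ)).inf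
      (fun q => D.m (D.uppE y q))) = y ⊔ D.X (D.uppBnd y p) := by
  intro p hp
  obtain ⟨k, hk⟩ : ∃ k, D.uppCard y - p = k := ⟨_, rfl⟩
  induction k generalizing p with
  | zero =>
      have hpr : p = D.uppCard y := by omega
      subst hpr
      rw [upp_top hD]
      have hempty : (Finset.univ.filter fun q : Fin (D.uppCard y) => D.uppCard y ≤ (q : ℕ)) = ∅ := by
        ext q; simp only [Finset.mem_filter, Finset.mem_univ, true_and, Finset.notMem_empty,
          iff_false]
        have := q.isLt; omega
      rw [hempty, Finset.inf_empty]
  | succ k ihk =>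
      have hp2 : p < D.uppCard y := by omega
      have hsplit : (Finset.univ.filter fun q : Fin (D.uppCard y) => p ≤ (q : ℕ))
          = insert ⟨p, hp2⟩ (Finset.univ.filter fun q : Fin (D.uppCard y) => p + 1 ≤ (q : ℕ)) := by
        ext q
        simp only [Finset.mem_filter, Finset.mem_univ, true_and, Finset.mem_insert]
        constructor
        · intro hq
          rcases Nat.eq_or_lt_of_le hq with h | h
          · exact Or.inl (Fin.ext h.symm)
          · exact Or.inr h
        · rintro (rfl | hq)
          · exact le_rfl
          · omega
      rw [hsplit, Finset.inf_insert]
      rw [ihk (p + 1) (by omega) (by omega)]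
      rw [uppBnd_succ hp2, inf_comm]
      rw [← upp_infform hD (le_m_uppE ⟨p, hp2⟩)]
      exact upp_bnd_stab hD hp2

end UpperVal

end ExtremalChainData

namespace ExtremalChainData

open scoped Classical

variable {L : Type*} [Lattice L] [Fintype L] [BoundedOrder L] {n : ℕ}
variable {D : ExtremalChainData L n} {y : L}

section UpperAssemble

variable (hD : D.IsTrim)
include hD

lemma upp_x_strictMono : StrictMono (fun p : Fin (D.uppCard y + 1) =>
    (⟨y ⊔ D.X (D.uppBnd y p), le_sup_left⟩ : Set.Ici y)) := by
  rw [Fin.strictMono_iff_lt_succ]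
  intro i
  show (⟨y ⊔ D.X (D.uppBnd y ((i.castSucc : Fin (D.uppCard y + 1)) : ℕ)), _⟩ : Set.Ici y)
      < ⟨y ⊔ D.X (D.uppBnd y ((i.succ : Fin (D.uppCard y + 1)) : ℕ)), _⟩
  rw [IciTrans.coe_lt_iff]
  show y ⊔ D.X (D.uppBnd y (i : ℕ)) < y ⊔ D.X (D.uppBnd y ((i : ℕ) + 1))
  have h1 : y ⊔ D.X (D.uppBnd y (i : ℕ)) = y ⊔ D.X (D.uppE y i) := by
    have := upp_bnd_stab hD (y := y) i.isLt
    simpa [Fin.eta] using this.symm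
  rw [h1, uppBnd_succ i.isLt]
  simpa [Fin.eta] using upp_jump hD (le_m_uppE i)

omit hD in
lemma upp_irred_card :
    ((Finset.univ : Finset (Set.Ici y)).filter fun w => InfIrred w).card ≤ D.uppCard y := by
  by_cases hne : ((Finset.univ : Finset (Set.Ici y)).filter fun w => InfIrred w).Nonempty
  case neg =>
    rw [Finset.not_nonempty_iff_eq_empty] at hne
    simp [hne]
  · obtain ⟨w0, hw0⟩ := hne
    have hw0' : InfIrred w0 := by simpa using hw0
    have hch : ∀ w : Set.Ici y, InfIrred w → ∃ t : Fin n, D.m t = (w : L) :=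
      fun w hw => D.m_surj _ (IciTrans.infIrred_coe hw)
    set g : Set.Ici y → Fin n := fun w =>
      if h : InfIrred w then (hch w h).choose else (hch w0 hw0').choose with hg
    have hgval : ∀ w : Set.Ici y, InfIrred w → D.m (g w) = (w : L) := by
      intro w hw
      simp only [hg, dif_pos hw]
      exact (hch w hw).choose_spec
    refine Finset.card_le_card_of_injOn g ?_ ?_
    · intro w hw
      simp only [Finset.mem_coe, Finset.mem_filter, Finset.mem_univ, true_and] at hw
      exact mem_uppSet.2 ((hgval w hw) ▸ w.2)
    · intro w hw w' hw' heq
      simp only [Finset.coe_filter, Finset.mem_univ, true_and, Set.mem_setOf_eq] at hw hw'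
      apply Subtype.ext
      rw [← hgval w hw, ← hgval w' hw', heq]

lemma upp_j_classify (w : Set.Ici y) (hw : SupIrred w) :
    ∃ t, t ∈ D.uppSet y ∧ (w : L) = y ⊔ D.j t := by
  have hwbot : ⊥ < w := lt_of_le_of_ne bot_le (by rintro rfl; exact hw.1 isMin_bot)
  obtain ⟨c, _, hc⟩ := exists_covBy_left hwbot
  have hcL : (c : L) ⋖ (w : L) := IciTrans.covBy_coe hc
  obtain ⟨t, ht⟩ := exists_isLabel hD hcL
  have hwj : (w : L) = (c : L) ⊔ D.j t := (main_sup hD hcL ht).symm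
  have htmem : t ∈ D.uppSet y := mem_uppSet.2 (le_trans c.2 (main_le_m hD hcL ht))
  refine ⟨t, htmem, ?_⟩
  have hle : y ⊔ D.j t ≤ (w : L) := sup_le w.2 (le_of_le_of_eq le_sup_right hwj.symm)
  rcases eq_or_lt_of_le hle with h | h
  · exact h.symm
  · exfalso
    set s : Set.Ici y := ⟨y ⊔ D.j t, le_sup_left⟩ with hs
    have hws : s < w := h
    have hcs : s ≤ c := by
      have h1 : s ⊔ c ≤ w := sup_le hws.le hc.lt.le
      rcases hc.eq_or_eq (le_sup_right : c ≤ s ⊔ c) h1 with h2 | h2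
      · exact h2 ▸ le_sup_left
      · rcases hw.2 h2 with h3 | h3
        · exact absurd h3 (ne_of_lt hws)
        · exact absurd h3 (ne_of_lt hc.lt)
    exact main_j_not_le hD hcL ht (le_trans le_sup_right (IciTrans.coe_le_iff.1 hcs))

lemma upp_j_block :
    (∀ t ∈ D.uppSet y, SupIrred (⟨y ⊔ D.j t, le_sup_left⟩ : Set.Ici y)) ∧
    Set.InjOn (fun t => (⟨y ⊔ D.j t, le_sup_left⟩ : Set.Ici y)) (D.uppSet y) := by
  classical
  set f : Fin n → Set.Ici y := fun t => ⟨y ⊔ D.j t, le_sup_left⟩ with hf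
  set SI : Finset (Set.Ici y) := Finset.univ.filter (fun w => SupIrred w) with hSI
  set IMG : Finset (Set.Ici y) := (D.uppSet y).image f with hIMG
  have hsub : SI ⊆ IMG := by
    intro w hw
    simp only [hSI, Finset.mem_filter, Finset.mem_univ, true_and] at hw
    obtain ⟨t, ht1, ht2⟩ := upp_j_classify hD w hw
    exact Finset.mem_image.2 ⟨t, ht1, Subtype.ext ht2.symm⟩
  have hchain : D.uppCard y ≤ SI.card :=
    chain_le_card_supIrred (fun p : Fin (D.uppCard y + 1) =>
      (⟨y ⊔ D.X (D.uppBnd y p), le_sup_left⟩ : Set.Ici y)) (upp_x_strictMono hD)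
  have himg_le : IMG.card ≤ (D.uppSet y).card := Finset.card_image_le
  have heq : SI = IMG := Finset.eq_of_subset_of_card_le hsub (himg_le.trans hchain)
  have hcard : IMG.card = (D.uppSet y).card := le_antisymm Finset.card_image_le
    (le_trans hchain (le_of_eq (congrArg Finset.card heq)))
  constructor
  · intro t ht
    have hmem : f t ∈ IMG := Finset.mem_image_of_mem f ht
    rw [← heq] at hmem
    simpa [hSI] using hmem
  · exact Finset.injOn_of_card_image_eq hcard

/-- The induced trim data on the upper interval `[y, ⊤]`. -/
noncomputable def uppData (hD : D.IsTrim) (y : L) :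
    ExtremalChainData (Set.Ici y) (D.uppCard y) where
  x := fun p => ⟨y ⊔ D.X (D.uppBnd y p), le_sup_left⟩
  x_strictMono := upp_x_strictMono hD
  x_bot := by
    apply Subtype.ext
    show y ⊔ D.X (D.uppBnd y ((0 : Fin (D.uppCard y + 1)) : ℕ)) = ((⊥ : Set.Ici y) : L)
    rw [IciTrans.coe_bot]
    simp [uppBnd_zero, X_zero]
  x_top := by
    apply Subtype.ext
    show y ⊔ D.X (D.uppBnd y ((Fin.last (D.uppCard y)) : ℕ)) = ((⊤ : Set.Ici y) : L)
    rw [IciTrans.coe_top, Fin.val_last]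
    exact upp_top hD
  maxlen := fun m c hc => (chain_le_card_infIrred c hc).trans upp_irred_card
  j := fun q => ⟨y ⊔ D.j (D.uppE y q), le_sup_left⟩
  m := fun q => ⟨D.m (D.uppE y q), le_m_uppE q⟩
  j_irr := fun q => (upp_j_block hD).1 _ (uppE_mem q)
  m_irr := fun q => IciTrans.infIrred_lift (D.m_irr _) _
  j_inj := fun q q' h =>
    uppE_inj ((upp_j_block hD).2 (uppE_mem q) (uppE_mem q') h)
  m_inj := fun q q' h => uppE_inj (D.m_inj (congrArg Subtype.val h))
  j_surj := fun a ha => by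
    obtain ⟨t, ht1, ht2⟩ := upp_j_classify hD a ha
    obtain ⟨q, hq⟩ := uppE_surj ht1
    exact ⟨q, Subtype.ext (show y ⊔ D.j (D.uppE y q) = (a : L) by rw [hq, ← ht2])⟩
  m_surj := fun a ha => by
    obtain ⟨t, ht⟩ := D.m_surj _ (IciTrans.infIrred_coe ha)
    obtain ⟨q, hq⟩ := uppE_surj (mem_uppSet.2 (ht ▸ a.2))
    exact ⟨q, Subtype.ext (show D.m (D.uppE y q) = (a : L) by rw [hq, ht])⟩
  x_eq_sup := fun i => by
    apply Subtype.ext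
    rw [IciTrans.coe_finset_sup]
    exact (upp_val hD i (by omega)).symm
  x_eq_inf := fun i => by
    apply Subtype.ext
    rw [IciTrans.coe_finset_inf]
    exact (upp_infval hD i (by omega)).symm

end UpperAssemble

end ExtremalChainData

namespace ExtremalChainData

open scoped Classical

variable {L : Type*} [Lattice L] [Fintype L] [BoundedOrder L] {n : ℕ}
variable {D : ExtremalChainData L n}

section LowerTransport

variable {z : L} (hD : D.IsTrim)
include hD

lemma lowTrim : (lowData hD z).IsTrim := by
  intro p a b hab
  apply Subtype.ext
  show ((a : L) ⊔ (z ⊓ D.X (D.lowBnd z p))) ⊓ (b : L)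
      = (a : L) ⊔ ((z ⊓ D.X (D.lowBnd z p)) ⊓ (b : L))
  set s := D.lowBnd z (p : ℕ) with hs
  have haz : (a : L) ≤ z := a.2
  have hbz : (b : L) ≤ z := b.2
  have hab' : (a : L) ≤ (b : L) := hab
  have h1 : (a : L) ⊔ (z ⊓ D.X s) = ((a : L) ⊔ D.X s) ⊓ z := by
    rw [lm_eq hD haz s, inf_comm z (D.X s)]
  have h2 : (z ⊓ D.X s) ⊓ (b : L) = D.X s ⊓ (b : L) := by
    rw [inf_assoc, inf_eq_right.2 (le_trans inf_le_right hbz)]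
  calc ((a : L) ⊔ (z ⊓ D.X s)) ⊓ (b : L)
      = (((a : L) ⊔ D.X s) ⊓ z) ⊓ (b : L) := by rw [h1]
  _ = ((a : L) ⊔ D.X s) ⊓ (b : L) := by rw [inf_assoc, inf_eq_right.2 hbz]
  _ = (a : L) ⊔ (D.X s ⊓ (b : L)) := lm_eq hD hab' s
  _ = (a : L) ⊔ ((z ⊓ D.X s) ⊓ (b : L)) := by rw [h2]

lemma lowData_X_succ_val (q : Fin (D.lowCard z)) :
    (((lowData hD z).X ((q : ℕ) + 1)) : L) = z ⊓ D.X ((D.lowE z q : ℕ) + 1) := by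
  rw [X_of_le _ q.isLt]
  show z ⊓ D.X (D.lowBnd z ((q : ℕ) + 1)) = _
  rw [lowBnd_succ q.isLt, Fin.eta]

lemma low_cond_iff' {c c' : L} (hc : c ≤ z) (hc' : c' ≤ z) (s : ℕ) :
    c' ≤ c ⊔ (z ⊓ D.X s) ↔ c' ≤ c ⊔ D.X s := by
  constructor
  · intro h
    exact h.trans (sup_le_sup_left inf_le_right c)
  · intro h
    have h1 : c ⊔ (z ⊓ D.X s) = (c ⊔ D.X s) ⊓ z := by
      rw [lm_eq hD hc s, inf_comm z (D.X s)]
    rw [h1]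
    exact le_inf h hc'

variable {y' a : Set.Iic z}

lemma low_label_of (hcov : y' ⋖ a) {t : Fin n} (hl : D.IsLabel ↑y' ↑a t) :
    ∃ p, D.lowE z p = t ∧ (lowData hD z).IsLabel y' a p := by
  have hcovL : (y' : L) ⋖ (a : L) := IicTrans.covBy_coe hcov
  have htJ : t ∈ D.lowSet z := mem_lowSet.2 ((main_j_le_z hD hcovL hl).trans a.2)
  obtain ⟨p, hp⟩ := lowE_surj htJ
  refine ⟨p, hp, ?_⟩
  rw [isLabel_iff (lowTrim hD) hcov.lt.le p]
  constructor
  · rw [IicTrans.coe_le_iff, IicTrans.coe_sup, lowData_X_succ_val hD p, hp]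
    exact (low_cond_iff' hD y'.2 a.2 _).2 (label_le_sup hD hcovL.lt.le hl)
  · intro k hk
    rw [IicTrans.coe_le_iff, IicTrans.coe_sup, lowData_X_succ_val hD k] at hk
    have hk' : (a : L) ≤ (y' : L) ⊔ D.X ((D.lowE z k : ℕ) + 1) :=
      (low_cond_iff' hD y'.2 a.2 _).1 hk
    have hmin := ((isLabel_iff hD hcovL.lt.le t).1 hl).2 (D.lowE z k) hk'
    by_contra hlt
    push_neg at hlt
    have := lowE_lt_val (p := k) (q := p) hlt
    rw [hp] at this
    have h2 : (t : ℕ) ≤ (D.lowE z k : ℕ) := hmin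
    omega

lemma low_label_to (hcov : y' ⋖ a) {p} (hl : (lowData hD z).IsLabel y' a p) :
    D.IsLabel ↑y' ↑a (D.lowE z p) := by
  obtain ⟨t, ht⟩ := exists_isLabel hD (IicTrans.covBy_coe hcov)
  obtain ⟨p', hp1, hp2⟩ := low_label_of hD hcov ht
  have : p = p' := isLabel_unique (lowTrim hD) hcov.lt.le hl hp2
  rw [this, hp1]
  exact ht

lemma low_mem_downLabels {a : Set.Iic z} {t : Fin n} :
    t ∈ D.downLabels ↑a ↔ ∃ p, D.lowE z p = t ∧ p ∈ (lowData hD z).downLabels a := by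
  constructor
  · intro h
    obtain ⟨y0, hy0c, hy0l⟩ := mem_downLabels.1 h
    have hy0z : y0 ≤ z := hy0c.lt.le.trans a.2
    have hcov : (⟨y0, hy0z⟩ : Set.Iic z) ⋖ a := IicTrans.covBy_lift hy0c
    obtain ⟨p, hp, hpl⟩ := low_label_of hD hcov hy0l
    exact ⟨p, hp, mem_downLabels.2 ⟨_, hcov, hpl⟩⟩
  · rintro ⟨p, hp, hmem⟩
    obtain ⟨y0, hc, hl⟩ := mem_downLabels.1 hmem
    have := low_label_to hD hc hl
    rw [hp] at this
    exact mem_downLabels.2 ⟨↑y0, IicTrans.covBy_coe hc, this⟩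

lemma low_mem_upLabels {b : Set.Iic z} {t : Fin n} :
    (t ∈ D.upLabels ↑b ∧ D.j t ≤ z) ↔
      ∃ p, D.lowE z p = t ∧ p ∈ (lowData hD z).upLabels b := by
  constructor
  · rintro ⟨h, hjz⟩
    obtain ⟨hc, hl, _, _⟩ := upLabels_witness hD h
    have hcz : (b : L) ⊔ D.j t ≤ z := sup_le b.2 hjz
    have hcov : b ⋖ (⟨(b : L) ⊔ D.j t, hcz⟩ : Set.Iic z) := IicTrans.covBy_lift hc
    obtain ⟨p, hp, hpl⟩ := low_label_of hD hcov hl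
    exact ⟨p, hp, mem_upLabels.2 ⟨_, hcov, hpl⟩⟩
  · rintro ⟨p, hp, hmem⟩
    obtain ⟨c, hc, hl⟩ := mem_upLabels.1 hmem
    have := low_label_to hD hc hl
    rw [hp] at this
    exact ⟨mem_upLabels.2 ⟨↑c, IicTrans.covBy_coe hc, this⟩, hp ▸ j_lowE_le p⟩

end LowerTransport

section UpperTransport

variable {y : L} (hD : D.IsTrim)
include hD

lemma uppTrim : (uppData hD y).IsTrim := by
  intro p a b hab
  apply Subtype.ext
  show ((a : L) ⊔ (y ⊔ D.X (D.uppBnd y p))) ⊓ (b : L)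
      = (a : L) ⊔ ((y ⊔ D.X (D.uppBnd y p)) ⊓ (b : L))
  set s := D.uppBnd y (p : ℕ) with hs
  have hya : y ≤ (a : L) := a.2
  have hyb : y ≤ (b : L) := b.2
  have hab' : (a : L) ≤ (b : L) := hab
  have h1 : (a : L) ⊔ (y ⊔ D.X s) = (a : L) ⊔ D.X s := by
    rw [← sup_assoc, sup_eq_left.2 hya]
  have h2 : (y ⊔ D.X s) ⊓ (b : L) = y ⊔ (D.X s ⊓ (b : L)) := lm_eq hD hyb s
  rw [h1, h2, lm_eq hD hab' s, ← sup_assoc, sup_eq_left.2 hya]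

lemma uppData_X_succ_val (q : Fin (D.uppCard y)) :
    (((uppData hD y).X ((q : ℕ) + 1)) : L) = y ⊔ D.X ((D.uppE y q : ℕ) + 1) := by
  rw [X_of_le _ q.isLt]
  show y ⊔ D.X (D.uppBnd y ((q : ℕ) + 1)) = _
  rw [uppBnd_succ q.isLt, Fin.eta]

omit hD in
lemma upp_cond_iff' {c c' : L} (hc : y ≤ c) (s : ℕ) :
    c' ≤ c ⊔ (y ⊔ D.X s) ↔ c' ≤ c ⊔ D.X s := by
  rw [← sup_assoc, sup_eq_left.2 hc]

variable {a' b' : Set.Ici y}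

lemma upp_label_of (hcov : a' ⋖ b') {t : Fin n} (hl : D.IsLabel ↑a' ↑b' t) :
    ∃ p, D.uppE y p = t ∧ (uppData hD y).IsLabel a' b' p := by
  have hcovL : (a' : L) ⋖ (b' : L) := IciTrans.covBy_coe hcov
  have htM : t ∈ D.uppSet y := mem_uppSet.2 (le_trans a'.2 (main_le_m hD hcovL hl))
  obtain ⟨p, hp⟩ := uppE_surj htM
  refine ⟨p, hp, ?_⟩
  rw [isLabel_iff (uppTrim hD) hcov.lt.le p]
  constructor
  · rw [IciTrans.coe_le_iff, IciTrans.coe_sup, uppData_X_succ_val hD p, hp]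
    exact (upp_cond_iff' a'.2 _).2 (label_le_sup hD hcovL.lt.le hl)
  · intro k hk
    rw [IciTrans.coe_le_iff, IciTrans.coe_sup, uppData_X_succ_val hD k] at hk
    have hk' : (b' : L) ≤ (a' : L) ⊔ D.X ((D.uppE y k : ℕ) + 1) :=
      (upp_cond_iff' a'.2 _).1 hk
    have hmin := ((isLabel_iff hD hcovL.lt.le t).1 hl).2 (D.uppE y k) hk'
    by_contra hlt
    push_neg at hlt
    have := uppE_lt_val (p := k) (q := p) hlt
    rw [hp] at this
    have h2 : (t : ℕ) ≤ (D.uppE y k : ℕ) := hmin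
    omega

lemma upp_label_to (hcov : a' ⋖ b') {p} (hl : (uppData hD y).IsLabel a' b' p) :
    D.IsLabel ↑a' ↑b' (D.uppE y p) := by
  obtain ⟨t, ht⟩ := exists_isLabel hD (IciTrans.covBy_coe hcov)
  obtain ⟨p', hp1, hp2⟩ := upp_label_of hD hcov ht
  have : p = p' := isLabel_unique (uppTrim hD) hcov.lt.le hl hp2
  rw [this, hp1]
  exact ht

lemma upp_mem_downLabels {a : Set.Ici y} {t : Fin n} :
    (t ∈ D.downLabels ↑a ∧ y ≤ D.m t) ↔
      ∃ p, D.uppE y p = t ∧ p ∈ (uppData hD y).downLabels a := by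
  constructor
  · rintro ⟨h, hym⟩
    obtain ⟨hc, hl, _, _⟩ := downLabels_witness hD h
    have hyc : y ≤ (a : L) ⊓ D.m t := le_inf a.2 hym
    have hcov : (⟨(a : L) ⊓ D.m t, hyc⟩ : Set.Ici y) ⋖ a := IciTrans.covBy_lift hc
    obtain ⟨p, hp, hpl⟩ := upp_label_of hD hcov hl
    exact ⟨p, hp, mem_downLabels.2 ⟨_, hcov, hpl⟩⟩
  · rintro ⟨p, hp, hmem⟩
    obtain ⟨y0, hc, hl⟩ := mem_downLabels.1 hmem
    have := upp_label_to hD hc hl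
    rw [hp] at this
    exact ⟨mem_downLabels.2 ⟨↑y0, IciTrans.covBy_coe hc, this⟩, hp ▸ le_m_uppE p⟩

lemma upp_mem_upLabels {b : Set.Ici y} {t : Fin n} :
    t ∈ D.upLabels ↑b ↔ ∃ p, D.uppE y p = t ∧ p ∈ (uppData hD y).upLabels b := by
  constructor
  · intro h
    obtain ⟨c, hcc, hl⟩ := mem_upLabels.1 h
    have hyc : y ≤ c := le_trans b.2 hcc.lt.le
    have hcov : b ⋖ (⟨c, hyc⟩ : Set.Ici y) := IciTrans.covBy_lift hcc
    obtain ⟨p, hp, hpl⟩ := upp_label_of hD hcov hl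
    exact ⟨p, hp, mem_upLabels.2 ⟨_, hcov, hpl⟩⟩
  · rintro ⟨p, hp, hmem⟩
    obtain ⟨c, hc, hl⟩ := mem_upLabels.1 hmem
    have := upp_label_to hD hc hl
    rw [hp] at this
    exact mem_upLabels.2 ⟨↑c, IciTrans.covBy_coe hc, this⟩

end UpperTransport

end ExtremalChainData

namespace ExtremalChainData

open scoped Classical

variable {L : Type*} [Lattice L] [Fintype L] [BoundedOrder L] {n : ℕ}
variable {D : ExtremalChainData L n}

/-- Independence in the Galois graph. -/
def Indep (D : ExtremalChainData L n) (S : Finset (Fin n)) : Prop :=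
  ∀ s ∈ S, ∀ t ∈ S, s ≠ t → D.j s ≤ D.m t

section DegenerateHelpers

variable (hD : D.IsTrim)
include hD

lemma jlast_le_m {t : Fin n} (ht : t ∈ D.downLabels ⊤) (hlt : (t : ℕ) < n - 1) :
    D.j ⟨n - 1, by have := t.isLt; omega⟩ ≤ D.m t := by
  have hn : 0 < n := by have := t.isLt; omega
  set N : Fin n := ⟨n - 1, by omega⟩ with hN
  by_contra hjm
  have hexp : (D.downLabels (D.m t)).sup D.j = D.m t := sup_downLabels hD _
  have hle : D.m t ≤ D.X (n - 1) := by
    rw [← hexp]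
    refine Finset.sup_le fun s hs => ?_
    have hjs : D.j s ≤ D.m t := (downLabels_witness hD hs).2.2.1
    have hsN : s ≠ N := by rintro rfl; exact hjm hjs
    have hs2 : (s : ℕ) + 1 ≤ n - 1 := by
      have h1 := s.isLt
      have h2 : (s : ℕ) ≠ n - 1 := fun h => hsN (Fin.ext h)
      omega
    exact (j_le_X D (Nat.lt_succ_self _)).trans (X_mono D hs2)
  obtain ⟨hcov, hl, _, _⟩ := downLabels_witness hD ht
  have hmax := label_max hD hcov hl (a := N)
    (by rw [top_inf_eq]; exact hle.trans (X_le_m D (le_of_eq rfl)))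
    (fun h => m_ne_top D N (le_antisymm le_top h))
  have : (N : ℕ) ≤ (t : ℕ) := hmax
  simp only [hN] at this
  omega

lemma j_le_m0 {t : Fin n} (ht : t ∈ D.upLabels ⊥) (h0 : 0 < (t : ℕ)) :
    D.j t ≤ D.m ⟨0, by have := t.isLt; omega⟩ := by
  have hn : 0 < n := by have := t.isLt; omega
  set Z : Fin n := ⟨0, by omega⟩ with hZ
  by_contra hjm
  have hexp : (D.upLabels (D.j t)).inf D.m = D.j t := inf_upLabels hD _
  have hge : D.X 1 ≤ D.j t := by
    rw [← hexp]
    refine Finset.le_inf fun s hs => ?_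
    have hms : D.j t ≤ D.m s := (upLabels_witness hD hs).2.2.1
    have hsZ : s ≠ Z := by rintro rfl; exact hjm hms
    have h1 : 1 ≤ (s : ℕ) := by
      have h2 : (s : ℕ) ≠ 0 := fun h => hsZ (Fin.ext h)
      omega
    exact X_le_m D h1
  have hX1 : D.X 1 = D.j Z := by
    have := X_succ_sup D Z
    simp only [hZ] at this ⊢
    rw [show ((⟨0, by omega⟩ : Fin n) : ℕ) + 1 = 1 from rfl] at this
    rw [this, X_zero, bot_sup_eq]
  obtain ⟨hcov, hl, _, _⟩ := upLabels_witness hD ht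
  have hmin := label_min hD hcov hl (a := Z)
    (by rw [← hX1] at *; exact hge.trans le_sup_right)
    (fun h => j_ne_bot D Z (le_bot_iff.1 h))
  have : (t : ℕ) ≤ (Z : ℕ) := hmin
  simp only [hZ] at this
  omega

end DegenerateHelpers

end ExtremalChainData

section CardLemmas

variable {M : Type*} [Lattice M] [Fintype M] [BoundedOrder M]

lemma card_Iic_lt {z : M} (hz : z ≠ ⊤) :
    Fintype.card (Set.Iic z) < Fintype.card M := by
  refine Fintype.card_lt_of_injective_of_notMem (Subtype.val) Subtype.val_injective
    (b := ⊤) ?_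
  rintro ⟨w, hw⟩
  exact hz (le_antisymm le_top (hw ▸ w.2))

lemma card_Ici_lt {y : M} (hy : y ≠ ⊥) :
    Fintype.card (Set.Ici y) < Fintype.card M := by
  refine Fintype.card_lt_of_injective_of_notMem (Subtype.val) Subtype.val_injective
    (b := ⊥) ?_
  rintro ⟨w, hw⟩
  exact hy (le_antisymm (hw ▸ w.2) bot_le)

lemma card_Iic_le (z : M) : Fintype.card (Set.Iic z) ≤ Fintype.card M :=
  Fintype.card_le_of_injective Subtype.val Subtype.val_injective

lemma card_Ici_le (y : M) : Fintype.card (Set.Ici y) ≤ Fintype.card M :=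
  Fintype.card_le_of_injective Subtype.val Subtype.val_injective

end CardLemmas

namespace ExtremalChainData

open scoped Classical

universe u

/-- The bundle of statements proven by simultaneous induction on the size of the lattice. -/
def MasterProp {L : Type u} [Lattice L] [Fintype L] [BoundedOrder L] {n : ℕ}
    (D : ExtremalChainData L n) : Prop :=
  Indep D (D.downLabels ⊤) ∧ Indep D (D.upLabels ⊥) ∧
  (∀ S, Indep D S → D.downLabels (S.sup D.j) = S) ∧
  (∀ S, Indep D S → D.upLabels (S.inf D.m) = S)

theorem master : ∀ (N : ℕ) (L : Type u) [Lattice L] [Fintype L] [BoundedOrder L]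
    (n : ℕ) (D : ExtremalChainData L n), D.IsTrim → Fintype.card L ≤ N →
    MasterProp D := by
  intro N
  induction N with
  | zero =>
      intro L _ _ _ n D hD hcard
      exfalso
      have : 0 < Fintype.card L := Fintype.card_pos
      omega
  | succ N IH =>
      intro L _ _ _ n D hD hcard
      -- S1 : independence of the top down-labels
      have S1 : Indep D (D.downLabels ⊤) := by
        intro s hs t ht hne
        rcases lt_or_gt_of_ne (fun h : (s : ℕ) = (t : ℕ) => hne (Fin.ext h)) with hst | hst
        · by_contra hjm
          obtain ⟨hcov, hl, _, _⟩ := downLabels_witness hD ht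
          have hmin := label_min hD hcov hl (a := s) le_top
            (fun h => hjm (h.trans inf_le_right))
          have : (t : ℕ) ≤ (s : ℕ) := hmin
          omega
        · -- (t : ℕ) < (s : ℕ)
          rcases eq_or_ne (D.m s ⊓ D.m t) ⊥ with hbot | hbot
          · rcases eq_or_ne ((s : ℕ)) (n - 1) with hsn | hsn
            · have h1 := jlast_le_m hD ht (by have := s.isLt; omega)
              have hss : (⟨n - 1, by have := s.isLt; omega⟩ : Fin n) = s := Fin.ext (show n - 1 = (s : ℕ) by omega)
              rwa [hss] at h1
            · exfalso
              have h1 := jlast_le_m hD ht (by have := s.isLt; omega)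
              have h2 := jlast_le_m hD hs (by have := s.isLt; omega)
              have h3 : D.j ⟨n - 1, by have := s.isLt; omega⟩ ≤ D.m s ⊓ D.m t := le_inf h2 h1
              rw [hbot] at h3
              exact j_ne_bot D _ (le_bot_iff.1 h3)
          · set d := D.m s ⊓ D.m t with hd
            have hcoe : ((⊤ : Set.Ici d) : L) = ⊤ := rfl
            have hIs := (upp_mem_downLabels (hD := hD) (y := d) (a := ⊤) (t := s))
            have hIt := (upp_mem_downLabels (hD := hD) (y := d) (a := ⊤) (t := t))
            rw [hcoe] at hIs hIt
            obtain ⟨ps, hps, hmem_s⟩ := hIs.1 ⟨hs, inf_le_left⟩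
            obtain ⟨pt, hpt, hmem_t⟩ := hIt.1 ⟨ht, inf_le_right⟩
            have hne' : ps ≠ pt := fun h => hne (by rw [← hps, ← hpt, h])
            have hcard' : Fintype.card (Set.Ici d) ≤ N := by
              have := card_Ici_lt (M := L) hbot
              omega
            have hM := IH (Set.Ici d) (D.uppCard d) (uppData hD d) (uppTrim hD) hcard'
            have hle := hM.1 ps hmem_s pt hmem_t hne'
            have hle' : d ⊔ D.j (D.uppE d ps) ≤ D.m (D.uppE d pt) := hle
            rw [hps, hpt] at hle'
            exact le_sup_right.trans hle'
      -- S2 : independence of the bottom up-labels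
      have S2 : Indep D (D.upLabels ⊥) := by
        intro s hs t ht hne
        rcases lt_or_gt_of_ne (fun h : (s : ℕ) = (t : ℕ) => hne (Fin.ext h)) with hst | hst
        · by_contra hjm
          obtain ⟨hcov, hl, _, _⟩ := upLabels_witness hD hs
          have hmax := label_max hD hcov hl (a := t) bot_le
            (fun h => hjm (le_sup_right.trans h))
          have : (t : ℕ) ≤ (s : ℕ) := hmax
          omega
        · -- (t : ℕ) < (s : ℕ)
          rcases eq_or_ne (D.j s ⊔ D.j t) ⊤ with htop | htop
          · rcases eq_or_ne ((t : ℕ)) 0 with htn | htn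
            · have h1 := j_le_m0 hD hs (by omega)
              have htt : (⟨0, by have := t.isLt; omega⟩ : Fin n) = t := Fin.ext (show 0 = (t : ℕ) by omega)
              rwa [htt] at h1
            · exfalso
              have h1 := j_le_m0 hD hs (by omega)
              have h2 := j_le_m0 hD ht (by omega)
              have h3 : D.j s ⊔ D.j t ≤ D.m ⟨0, by have := t.isLt; omega⟩ := sup_le h1 h2
              rw [htop] at h3
              exact m_ne_top D _ (le_antisymm le_top h3)
          · set c := D.j s ⊔ D.j t with hc
            have hcoe : ((⊥ : Set.Iic c) : L) = ⊥ := rfl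
            have hIs := (low_mem_upLabels (hD := hD) (z := c) (b := ⊥) (t := s))
            have hIt := (low_mem_upLabels (hD := hD) (z := c) (b := ⊥) (t := t))
            rw [hcoe] at hIs hIt
            obtain ⟨ps, hps, hmem_s⟩ := hIs.1 ⟨hs, le_sup_left⟩
            obtain ⟨pt, hpt, hmem_t⟩ := hIt.1 ⟨ht, le_sup_right⟩
            have hne' : ps ≠ pt := fun h => hne (by rw [← hps, ← hpt, h])
            have hcard' : Fintype.card (Set.Iic c) ≤ N := by
              have := card_Iic_lt (M := L) htop
              omega
            have hM := IH (Set.Iic c) (D.lowCard c) (lowData hD c) (lowTrim hD) hcard'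
            have hle := hM.2.1 ps hmem_s pt hmem_t hne'
            have hle' : D.j (D.lowE c ps) ≤ c ⊓ D.m (D.lowE c pt) := hle
            rw [hps, hpt] at hle'
            exact hle'.trans inf_le_right
      -- S3 : surjectivity for down labels
      have S3 : ∀ S, Indep D S → D.downLabels (S.sup D.j) = S := by
        intro S hS
        rcases eq_or_ne (S.sup D.j) ⊤ with htop | htop
        · have hSsub : ∀ s ∈ S, s ∈ D.downLabels ⊤ := by
            intro s hsS
            have herase : (S.erase s).sup D.j ≤ D.m s :=
              Finset.sup_le fun u hu =>
                hS u (Finset.mem_of_mem_erase hu) s hsS (Finset.ne_of_mem_erase hu)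
            have hsup : D.m s ⊔ D.j s = ⊤ := by
              refine le_antisymm le_top ?_
              rw [← htop, ← Finset.insert_erase hsS, Finset.sup_insert]
              exact sup_le le_sup_right (herase.trans le_sup_left)
            have hcb := m_covBy_sup hD s
            rw [hsup] at hcb
            exact (mem_downLabels_top_iff hD).2 hcb
          rw [htop]
          apply Finset.ext
          intro t
          constructor
          · intro ht
            by_contra htS
            have hletop : (⊤ : L) ≤ D.m t := by
              rw [← htop]
              refine Finset.sup_le fun s hsS => ?_
              exact S1 s (hSsub s hsS) t ht (fun h => htS (h ▸ hsS))
            exact m_ne_top D t (le_antisymm le_top hletop)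
          · intro htS
            exact hSsub t htS
        · set x := S.sup D.j with hx
          have hSsubJ : ∀ s ∈ S, s ∈ D.lowSet x := fun s hs => mem_lowSet.2 (Finset.le_sup hs)
          set S' : Finset (Fin (D.lowCard x)) :=
            Finset.univ.filter (fun p => D.lowE x p ∈ S) with hS'
          have hS'mem : ∀ p, p ∈ S' ↔ D.lowE x p ∈ S := by intro p; simp [hS']
          have hsurj : ∀ s ∈ S, ∃ p, p ∈ S' ∧ D.lowE x p = s := by
            intro s hs
            obtain ⟨p, hp⟩ := lowE_surj (hSsubJ s hs)
            exact ⟨p, (hS'mem p).2 (hp ▸ hs), hp⟩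
          have hIndep' : Indep (lowData hD x) S' := by
            intro p hp q hq hne
            have h1 : D.lowE x p ∈ S := (hS'mem p).1 hp
            have h2 : D.lowE x q ∈ S := (hS'mem q).1 hq
            have h3 : D.lowE x p ≠ D.lowE x q := fun h => hne (lowE_inj h)
            show (lowData hD x).j p ≤ (lowData hD x).m q
            have hval : D.j (D.lowE x p) ≤ x ⊓ D.m (D.lowE x q) :=
              le_inf (Finset.le_sup h1) (hS _ h1 _ h2 h3)
            exact hval
          have hsup' : S'.sup (lowData hD x).j = ⊤ := by
            apply Subtype.ext
            rw [IicTrans.coe_finset_sup, IicTrans.coe_top]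
            refine le_antisymm (Finset.sup_le fun p hp => Finset.le_sup ((hS'mem p).1 hp)) ?_
            refine Finset.sup_le fun s hs => ?_
            obtain ⟨p, hp1, hp2⟩ := hsurj s hs
            exact le_trans (le_of_eq (congrArg D.j hp2.symm))
              (Finset.le_sup (f := fun q => (((lowData hD x).j q : L))) hp1)
          have hcard' : Fintype.card (Set.Iic x) ≤ N := by
            have := card_Iic_lt (M := L) htop
            omega
          have hM := IH (Set.Iic x) (D.lowCard x) (lowData hD x) (lowTrim hD) hcard'
          have hdown := hM.2.2.1 S' hIndep'
          rw [hsup'] at hdown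
          apply Finset.ext
          intro t
          have hiff := low_mem_downLabels (hD := hD) (z := x) (a := ⊤) (t := t)
          have hcoe : ((⊤ : Set.Iic x) : L) = x := rfl
          rw [hcoe] at hiff
          rw [hiff, hdown]
          constructor
          · rintro ⟨p, hp, hmem⟩
            exact hp ▸ (hS'mem p).1 hmem
          · intro htS
            obtain ⟨p, hp1, hp2⟩ := hsurj t htS
            exact ⟨p, hp2, hp1⟩
      -- S4 : surjectivity for up labels
      have S4 : ∀ S, Indep D S → D.upLabels (S.inf D.m) = S := by
        intro S hS
        rcases eq_or_ne (S.inf D.m) ⊥ with hbot | hbot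
        · have hSsub : ∀ s ∈ S, s ∈ D.upLabels ⊥ := by
            intro s hsS
            have herase : D.j s ≤ (S.erase s).inf D.m :=
              Finset.le_inf fun u hu =>
                hS s hsS u (Finset.mem_of_mem_erase hu) (Finset.ne_of_mem_erase hu).symm
            have hinf : D.j s ⊓ D.m s = ⊥ := by
              refine le_antisymm ?_ bot_le
              rw [← hbot, ← Finset.insert_erase hsS, Finset.inf_insert]
              exact le_inf inf_le_right (inf_le_left.trans herase)
            have hcb := j_inf_covBy hD s
            rw [hinf] at hcb
            exact (mem_upLabels_bot_iff hD).2 hcb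
          rw [hbot]
          apply Finset.ext
          intro t
          constructor
          · intro ht
            by_contra htS
            have hlebot : D.j t ≤ (⊥ : L) := by
              rw [← hbot]
              refine Finset.le_inf fun s hsS => ?_
              exact S2 t ht s (hSsub s hsS) (fun h => htS (h ▸ hsS))
            exact j_ne_bot D t (le_bot_iff.1 hlebot)
          · intro htS
            exact hSsub t htS
        · set b := S.inf D.m with hb
          have hSsubM : ∀ s ∈ S, s ∈ D.uppSet b := fun s hs => mem_uppSet.2 (Finset.inf_le hs)
          set S' : Finset (Fin (D.uppCard b)) :=
            Finset.univ.filter (fun p => D.uppE b p ∈ S) with hS'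
          have hS'mem : ∀ p, p ∈ S' ↔ D.uppE b p ∈ S := by intro p; simp [hS']
          have hsurj : ∀ s ∈ S, ∃ p, p ∈ S' ∧ D.uppE b p = s := by
            intro s hs
            obtain ⟨p, hp⟩ := uppE_surj (hSsubM s hs)
            exact ⟨p, (hS'mem p).2 (hp ▸ hs), hp⟩
          have hIndep' : Indep (uppData hD b) S' := by
            intro p hp q hq hne
            have h1 : D.uppE b p ∈ S := (hS'mem p).1 hp
            have h2 : D.uppE b q ∈ S := (hS'mem q).1 hq
            have h3 : D.uppE b p ≠ D.uppE b q := fun h => hne (uppE_inj h)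
            show (uppData hD b).j p ≤ (uppData hD b).m q
            have hval : b ⊔ D.j (D.uppE b p) ≤ D.m (D.uppE b q) :=
              sup_le (Finset.inf_le h2) (hS _ h1 _ h2 h3)
            exact hval
          have hinf' : S'.inf (uppData hD b).m = ⊥ := by
            apply Subtype.ext
            rw [IciTrans.coe_finset_inf, IciTrans.coe_bot]
            refine le_antisymm ?_ (Finset.le_inf fun p hp => Finset.inf_le ((hS'mem p).1 hp))
            refine Finset.le_inf fun s hs => ?_
            obtain ⟨p, hp1, hp2⟩ := hsurj s hs
            exact le_trans
              (Finset.inf_le (f := fun q => (((uppData hD b).m q : L))) hp1)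
              (le_of_eq (congrArg D.m hp2))
          have hcard' : Fintype.card (Set.Ici b) ≤ N := by
            have := card_Ici_lt (M := L) hbot
            omega
          have hM := IH (Set.Ici b) (D.uppCard b) (uppData hD b) (uppTrim hD) hcard'
          have hup := hM.2.2.2 S' hIndep'
          rw [hinf'] at hup
          apply Finset.ext
          intro t
          have hiff := upp_mem_upLabels (hD := hD) (y := b) (b := ⊥) (t := t)
          have hcoe : ((⊥ : Set.Ici b) : L) = b := rfl
          rw [hcoe] at hiff
          rw [hiff, hup]
          constructor
          · rintro ⟨p, hp, hmem⟩
            exact hp ▸ (hS'mem p).1 hmem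
          · intro htS
            obtain ⟨p, hp1, hp2⟩ := hsurj t htS
            exact ⟨p, hp2, hp1⟩
      exact ⟨S1, S2, S3, S4⟩

end ExtremalChainData

namespace ExtremalChainData

open scoped Classical

variable {L : Type*} [Lattice L] [Fintype L] [BoundedOrder L] {n : ℕ}
variable {D : ExtremalChainData L n}

variable (hD : D.IsTrim)
include hD

lemma downIndep (a : L) : Indep D (D.downLabels a) := by
  intro s hs t ht hne
  have hcoe : ((⊤ : Set.Iic a) : L) = a := rfl
  have hIs := low_mem_downLabels (hD := hD) (z := a) (a := ⊤) (t := s)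
  have hIt := low_mem_downLabels (hD := hD) (z := a) (a := ⊤) (t := t)
  rw [hcoe] at hIs hIt
  obtain ⟨ps, hps, hmem_s⟩ := hIs.1 hs
  obtain ⟨pt, hpt, hmem_t⟩ := hIt.1 ht
  have hM := master (Fintype.card (Set.Iic a)) (Set.Iic a) (D.lowCard a) (lowData hD a)
    (lowTrim hD) le_rfl
  have hne' : ps ≠ pt := fun h => hne (by rw [← hps, ← hpt, h])
  have hle := hM.1 ps hmem_s pt hmem_t hne'
  have hle' : D.j (D.lowE a ps) ≤ a ⊓ D.m (D.lowE a pt) := hle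
  rw [hps, hpt] at hle'
  exact hle'.trans inf_le_right

lemma upIndep (b : L) : Indep D (D.upLabels b) := by
  intro s hs t ht hne
  have hcoe : ((⊥ : Set.Ici b) : L) = b := rfl
  have hIs := upp_mem_upLabels (hD := hD) (y := b) (b := ⊥) (t := s)
  have hIt := upp_mem_upLabels (hD := hD) (y := b) (b := ⊥) (t := t)
  rw [hcoe] at hIs hIt
  obtain ⟨ps, hps, hmem_s⟩ := hIs.1 hs
  obtain ⟨pt, hpt, hmem_t⟩ := hIt.1 ht
  have hM := master (Fintype.card (Set.Ici b)) (Set.Ici b) (D.uppCard b) (uppData hD b)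
    (uppTrim hD) le_rfl
  have hne' : ps ≠ pt := fun h => hne (by rw [← hps, ← hpt, h])
  have hle := hM.2.1 ps hmem_s pt hmem_t hne'
  have hle' : b ⊔ D.j (D.uppE b ps) ≤ D.m (D.uppE b pt) := hle
  rw [hps, hpt] at hle'
  exact le_sup_right.trans hle'

end ExtremalChainData

open ExtremalChainData

theorem rowmotion_well_defined' {L : Type*} [Lattice L] [Fintype L] [BoundedOrder L]
    {n : ℕ} (D : ExtremalChainData L n) (hD : D.IsTrim) :
    Set.range D.downLabels = Set.range D.upLabels ∧
    (∀ a : L, ∃! b : L, D.downLabels a = D.upLabels b) ∧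
    ∃ row : L ≃ L, ∀ a : L, D.downLabels a = D.upLabels (row a) := by
  have hM := master (Fintype.card L) L n D hD le_rfl
  have hDown : ∀ a : L, D.upLabels ((D.downLabels a).inf D.m) = D.downLabels a :=
    fun a => hM.2.2.2 _ (downIndep hD a)
  have hUp : ∀ b : L, D.downLabels ((D.upLabels b).sup D.j) = D.upLabels b :=
    fun b => hM.2.2.1 _ (upIndep hD b)
  refine ⟨?_, ?_, ?_⟩
  · ext S
    simp only [Set.mem_range]
    constructor
    · rintro ⟨a, rfl⟩
      exact ⟨(D.downLabels a).inf D.m, hDown a⟩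
    · rintro ⟨b, rfl⟩
      exact ⟨(D.upLabels b).sup D.j, hUp b⟩
  · intro a
    refine ⟨(D.downLabels a).inf D.m, (hDown a).symm, ?_⟩
    intro b hb
    apply upLabels_injective hD
    rw [hDown a, ← hb]
  · refine ⟨⟨fun a => (D.downLabels a).inf D.m, fun b => (D.upLabels b).sup D.j, ?_, ?_⟩, ?_⟩
    · intro a
      show (D.upLabels ((D.downLabels a).inf D.m)).sup D.j = a
      rw [hDown a]
      exact sup_downLabels hD a
    · intro b
      show (D.downLabels ((D.upLabels b).sup D.j)).inf D.m = b
      rw [hUp b]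
      exact inf_upLabels hD b
    · intro a
      exact (hDown a).symm


/-- In a trim lattice the collection of downward label sets equals the
collection of upward label sets; consequently rowmotion — sending `a` to the
unique `b` with `D^γ(a) = U^γ(b)` — is a well-defined bijection. -/
theorem rowmotion_well_defined {L : Type*} [Lattice L] [Fintype L] [BoundedOrder L]
    {n : ℕ} (D : ExtremalChainData L n) (hD : D.IsTrim) :
    Set.range D.downLabels = Set.range D.upLabels ∧
    (∀ a : L, ∃! b : L, D.downLabels a = D.upLabels b) ∧
    ∃ row : L ≃ L, ∀ a : L, D.downLabels a = D.upLabels (row a) :=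
  rowmotion_well_defined' D hD
end

section
/- In a finite semidistributive lattice, for any cover relation x ⋖ y, the maximal element m with m ∧ y = x equals κ(j), where j is the minimal element with x ∨ j = y and κ(j) = max{ z : z ≥ j_*, z ≱ j } with j_* the unique element covered by j. -/
/-- In a finite semidistributive lattice, for a cover `x ⋖ y`, the maximal
element `m` with `m ⊓ y = x` equals `κ(j)`, the maximal element above `j⁎` but
not above `j`, where `j` is the minimal element with `x ⊔ j = y` and `j⁎ ⋖ j`
is its unique lower cover. -/
theorem kappa_of_cover {L : Type*} [Lattice L] [Fintype L]
    (hSD₁ : ∀ x y z : L, x ⊔ y = x ⊔ z → x ⊔ (y ⊓ z) = x ⊔ y)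
    (hSD₂ : ∀ x y z : L, x ⊓ y = x ⊓ z → x ⊓ (y ⊔ z) = x ⊓ y)
    (x y j jstar m kj : L) (hxy : x ⋖ y)
    (hj : IsLeast {z : L | x ⊔ z = y} j)
    (hjstar : jstar ⋖ j)
    (hm : IsGreatest {z : L | z ⊓ y = x} m)
    (hkj : IsGreatest {z : L | jstar ≤ z ∧ ¬ j ≤ z} kj) :
    m = kj := by
  have hjy : j ≤ y := le_sup_right.trans (le_of_eq hj.1)
  have hjx : ¬ j ≤ x := by
    intro h
    exact hxy.lt.ne ((sup_eq_left.mpr h).symm.trans hj.1)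
  -- jstar ≤ x
  have hjsx : jstar ≤ x := by
    rcases hxy.eq_or_eq le_sup_left (sup_le hxy.le (hjstar.le.trans hjy)) with h | h
    · exact le_sup_right.trans h.le
    · exact absurd (hj.2 h) (not_le_of_gt hjstar.lt)
  have hxm : x ≤ m := hm.1 ▸ inf_le_left
  -- j ≰ m
  have hjm : ¬ j ≤ m := fun h => hjx (hm.1 ▸ le_inf h hjy)
  have h1 : m ≤ kj := hkj.2 ⟨hjsx.trans hxm, hjm⟩
  -- x ≤ kj, hence kj ⊓ y = x by the cover property
  have hxkj : x ≤ kj := hkj.2 ⟨hjsx, hjx⟩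
  have h2 : kj ⊓ y = x := by
    rcases hxy.eq_or_eq (le_inf hxkj hxy.le) inf_le_right with h | h
    · exact h
    · exact absurd (hjy.trans (h ▸ inf_le_left)) hkj.1.2
  exact le_antisymm h1 (hm.2 h2)
end

section
/- Every finite extremal semidistributive lattice is trim; i.e., if a finite semidistributive lattice of length n has exactly n join-irreducibles and n meet-irreducibles, then it possesses a maximal chain of left modular elements. -/
section Helpers

variable {L : Type*} [Lattice L] [Fintype L]

private lemma TW_sup_inf' {a b : L}
    (hSD₁ : ∀ x y z : L, x ⊔ y = x ⊔ z → x ⊔ (y ⊓ z) = x ⊔ y)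
    (T : Finset L) (hT : T.Nonempty) (h : ∀ w ∈ T, a ⊔ w = b) :
    a ⊔ T.inf' hT id = b := by
  induction hT using Finset.Nonempty.cons_induction with
  | singleton w => simpa using h w (by simp)
  | cons w s hws hs ih =>
      rw [Finset.inf'_cons]
      have hw : a ⊔ w = b := h w (by simp)
      have hrest : a ⊔ s.inf' hs id = b := ih fun x hx => h x (Finset.mem_cons_of_mem hx)
      have := hSD₁ a w (s.inf' hs id) (by rw [hw, hrest])
      exact this.trans hw

private lemma TW_inf_sup' {a b : L}
    (hSD₂ : ∀ x y z : L, x ⊓ y = x ⊓ z → x ⊓ (y ⊔ z) = x ⊓ y)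
    (T : Finset L) (hT : T.Nonempty) (h : ∀ w ∈ T, b ⊓ w = a) :
    b ⊓ T.sup' hT id = a := by
  induction hT using Finset.Nonempty.cons_induction with
  | singleton w => simpa using h w (by simp)
  | cons w s hws hs ih =>
      rw [Finset.sup'_cons]
      have hw : b ⊓ w = a := h w (by simp)
      have hrest : b ⊓ s.sup' hs id = a := ih fun x hx => h x (Finset.mem_cons_of_mem hx)
      have := hSD₂ b w (s.sup' hs id) (by rw [hw, hrest])
      exact this.trans hw

/-- For a cover `a ⋖ b` in a finite lattice satisfying SD∨, the set
`{w | a ⊔ w = b}` has a minimum element, which is join-irreducible. -/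
private lemma TW_exists_min_label
    (hSD₁ : ∀ x y z : L, x ⊔ y = x ⊔ z → x ⊔ (y ⊓ z) = x ⊔ y)
    {a b : L} (hab : a ⋖ b) :
    ∃ j : L, SupIrred j ∧ a ⊔ j = b ∧ ∀ w, a ⊔ w = b → j ≤ w := by
  classical
  set S : Finset L := Finset.univ.filter (fun w => a ⊔ w = b) with hS
  have hbS : b ∈ S := by simp [hS, sup_eq_right.2 hab.le]
  have hne : S.Nonempty := ⟨b, hbS⟩
  set j : L := S.inf' hne id with hj
  have hmin : ∀ w, a ⊔ w = b → j ≤ w := fun w hw =>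
    Finset.inf'_le id (by simp [hS, hw])
  have hjb : a ⊔ j = b := TW_sup_inf' hSD₁ S hne (by intro w hw; simpa [hS] using hw)
  refine ⟨j, ⟨?_, ?_⟩, hjb, hmin⟩
  · intro hmn
    have hja : j ≤ a := le_trans (hmn inf_le_right : j ≤ a ⊓ j) inf_le_left
    exact hab.lt.ne (by rw [← hjb, sup_eq_left.2 hja])
  · intro u v huv
    by_contra hcon
    push_neg at hcon
    obtain ⟨hu, hv⟩ := hcon
    have huj : u < j := lt_of_le_of_ne (huv ▸ le_sup_left) hu
    have hvj : v < j := lt_of_le_of_ne (huv ▸ le_sup_right) hv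
    have hau : a ⊔ u = a := by
      rcases hab.eq_or_eq le_sup_left (sup_le hab.le (huj.le.trans (hjb ▸ le_sup_right))) with h | h
      · exact h
      · exact absurd (hmin u h) huj.not_ge
    have hav : a ⊔ v = a := by
      rcases hab.eq_or_eq le_sup_left (sup_le hab.le (hvj.le.trans (hjb ▸ le_sup_right))) with h | h
      · exact h
      · exact absurd (hmin v h) hvj.not_ge
    have : a ⊔ j = a := by
      rw [← huv, ← sup_assoc, hau, hav]
    exact hab.lt.ne (by rw [← hjb, this])

/-- Dual: maximum meet-label of a cover, which is meet-irreducible. -/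
private lemma TW_exists_max_label
    (hSD₂ : ∀ x y z : L, x ⊓ y = x ⊓ z → x ⊓ (y ⊔ z) = x ⊓ y)
    {a b : L} (hab : a ⋖ b) :
    ∃ m : L, InfIrred m ∧ b ⊓ m = a ∧ ∀ w, b ⊓ w = a → w ≤ m := by
  classical
  set S : Finset L := Finset.univ.filter (fun w => b ⊓ w = a) with hS
  have haS : a ∈ S := by simp [hS, inf_eq_right.2 hab.le]
  have hne : S.Nonempty := ⟨a, haS⟩
  set m : L := S.sup' hne id with hm
  have hmax : ∀ w, b ⊓ w = a → w ≤ m := fun w hw =>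
    Finset.le_sup' id (by simp [hS, hw])
  have hma : b ⊓ m = a := TW_inf_sup' hSD₂ S hne (by intro w hw; simpa [hS] using hw)
  refine ⟨m, ⟨?_, ?_⟩, hma, hmax⟩
  · intro hmx
    have hbm : b ≤ m := le_trans le_sup_left (hmx le_sup_right : b ⊔ m ≤ m)
    exact hab.lt.ne' (by rw [← hma, inf_eq_left.2 hbm])
  · intro u v huv
    by_contra hcon
    push_neg at hcon
    obtain ⟨hu, hv⟩ := hcon
    have hum : m < u := lt_of_le_of_ne (huv ▸ inf_le_left) (Ne.symm hu)
    have hvm : m < v := lt_of_le_of_ne (huv ▸ inf_le_right) (Ne.symm hv)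
    have hbu : b ⊓ u = b := by
      rcases hab.eq_or_eq (le_inf hab.le ((hma ▸ inf_le_right : a ≤ m).trans hum.le))
        inf_le_left with h | h
      · exact absurd (hmax u h) hum.not_ge
      · exact h
    have hbv : b ⊓ v = b := by
      rcases hab.eq_or_eq (le_inf hab.le ((hma ▸ inf_le_right : a ≤ m).trans hvm.le))
        inf_le_left with h | h
      · exact absurd (hmax v h) hvm.not_ge
      · exact h
    have : b ⊓ m = b := by rw [← huv, ← inf_assoc, hbu, hbv]
    exact hab.lt.ne' (by rw [← hma, this])

/-- Transfer lemma: two covers sharing the same minimum join-label have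
comparable maximum meet-labels. -/
private lemma TW_transfer
    (hSD₂ : ∀ x y z : L, x ⊓ y = x ⊓ z → x ⊓ (y ⊔ z) = x ⊓ y)
    {a b a' b' j m m' : L}
    (hab : a ⋖ b) (hab' : a' ⋖ b')
    (hja : a ⊔ j = b) (hjmin : ∀ w, a ⊔ w = b → j ≤ w)
    (hja' : a' ⊔ j = b') (hjmin' : ∀ w, a' ⊔ w = b' → j ≤ w)
    (hm : b ⊓ m = a) (hm'max : ∀ w, b' ⊓ w = a' → w ≤ m') :
    m ≤ m' := by
  have hjna : ¬ j ≤ a := fun h => hab.lt.ne (by rw [← hja, sup_eq_left.2 h])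
  have hjna' : ¬ j ≤ a' := fun h => hab'.lt.ne (by rw [← hja', sup_eq_left.2 h])
  have hjb : j ≤ b := hja ▸ le_sup_right
  have hjb' : j ≤ b' := hja' ▸ le_sup_right
  have haj : a ⊓ j ≤ a' := by
    rcases hab'.eq_or_eq le_sup_left
        (sup_le hab'.le ((inf_le_right : a ⊓ j ≤ j).trans hjb')) with h | h
    · exact sup_eq_left.1 h
    · exact absurd ((hjmin' _ h).trans inf_le_left) hjna
  have haj' : a' ⊓ j ≤ a := by
    rcases hab.eq_or_eq le_sup_left
        (sup_le hab.le ((inf_le_right : a' ⊓ j ≤ j).trans hjb)) with h | h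
    · exact sup_eq_left.1 h
    · exact absurd ((hjmin _ h).trans inf_le_left) hjna'
  have hinfeq : a ⊓ j = a' ⊓ j := le_antisymm (le_inf haj inf_le_right) (le_inf haj' inf_le_right)
  have hjm : j ⊓ m = j ⊓ a' := by
    have h1 : j ⊓ m = j ⊓ a := by rw [← hm, ← inf_assoc, inf_eq_left.2 hjb]
    rw [h1, inf_comm j a, hinfeq, inf_comm]
  have hsd := hSD₂ j m a' hjm
  have hkey : b' ⊓ (m ⊔ a') = a' := by
    rcases hab'.eq_or_eq (le_inf hab'.le le_sup_right) inf_le_left with h | h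
    · exact h
    · exfalso
      apply hjna'
      have h2 : j ⊓ (m ⊔ a') = j := inf_eq_left.2 (hjb'.trans (inf_eq_left.1 h))
      calc j = j ⊓ (m ⊔ a') := h2.symm
        _ = j ⊓ a' := by rw [hsd, hjm]
        _ ≤ a' := inf_le_right
  exact le_sup_left.trans (hm'max _ hkey)

/-- If no cover is "invisible" to `x`, then `x` is left modular. -/
private lemma TW_leftModular {x : L}
    (h : ∀ a b : L, a ⋖ b → x ⊔ a = x ⊔ b → x ⊓ a = x ⊓ b → False) :
    LeftModular x := by
  intro y z hyz
  by_contra hne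
  have hAB : y ⊔ (x ⊓ z) < (y ⊔ x) ⊓ z :=
    lt_of_le_of_ne
      (sup_le (le_inf le_sup_left hyz) (le_inf (inf_le_left.trans le_sup_right) inf_le_right))
      (Ne.symm hne)
  obtain ⟨t, hAt, htB⟩ := exists_covBy_le_of_lt hAB
  refine h _ _ hAt ?_ ?_
  · -- x ⊔ A = x ⊔ t
    refine le_antisymm (sup_le_sup_left hAt.le x) (sup_le le_sup_left ?_)
    calc t ≤ (y ⊔ x) ⊓ z := htB
      _ ≤ y ⊔ x := inf_le_left
      _ ≤ x ⊔ (y ⊔ x ⊓ z) := by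
          rw [sup_comm x]
          exact sup_le (le_sup_left.trans le_sup_left) le_sup_right
  · -- x ⊓ A = x ⊓ t
    refine le_antisymm (inf_le_inf_left x hAt.le) (le_inf inf_le_left ?_)
    calc x ⊓ t ≤ x ⊓ z := inf_le_inf_left x (htB.trans inf_le_right)
      _ ≤ y ⊔ x ⊓ z := le_sup_right

/-- Adjacent elements of a maximal-length chain form covers. -/
private lemma TW_chain_covers {n : ℕ} {c : Fin (n + 1) → L} (hc : StrictMono c)
    (hmax : ∀ (m : ℕ) (d : Fin (m + 1) → L), StrictMono d → m ≤ n) (i : Fin n) :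
    c i.castSucc ⋖ c i.succ := by
  refine ⟨hc (Fin.castSucc_lt_succ (i := i)), ?_⟩
  intro w hw1 hw2
  set d : Fin (n + 2) → L := fun k =>
    if h : (k : ℕ) ≤ (i : ℕ) then c ⟨k, by omega⟩
    else if (k : ℕ) = (i : ℕ) + 1 then w
    else c ⟨(k : ℕ) - 1, by omega⟩ with hd
  have hdsm : StrictMono d := by
    rw [Fin.strictMono_iff_lt_succ]
    intro k
    have hk : (k : ℕ) < n + 1 := k.isLt
    have hcs : ((Fin.castSucc k : Fin (n + 2)) : ℕ) = (k : ℕ) := rfl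
    have hsc : ((Fin.succ k : Fin (n + 2)) : ℕ) = (k : ℕ) + 1 := rfl
    rcases lt_trichotomy (k : ℕ) (i : ℕ) with h | h | h
    · have e1 : d (Fin.castSucc k) = c ⟨(k : ℕ), by omega⟩ := by
        simp only [hd, hcs]; rw [dif_pos (by omega)]
      have e2 : d (Fin.succ k) = c ⟨(k : ℕ) + 1, by omega⟩ := by
        simp only [hd, hsc]; rw [dif_pos (by omega)]
      rw [e1, e2]
      exact hc (Fin.mk_lt_mk.2 (by omega))
    · have e1 : d (Fin.castSucc k) = c ⟨(k : ℕ), by omega⟩ := by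
        simp only [hd, hcs]; rw [dif_pos (by omega)]
      have e2 : d (Fin.succ k) = w := by
        simp only [hd, hsc]; rw [dif_neg (by omega), if_pos (by omega)]
      rw [e1, e2]
      have : c ⟨(k : ℕ), by omega⟩ = c i.castSucc := by
        congr 1; exact Fin.ext (by simp [h])
      rw [this]; exact hw1
    · rcases Nat.eq_or_lt_of_le h with h' | h'
      · have e1 : d (Fin.castSucc k) = w := by
          simp only [hd, hcs]; rw [dif_neg (by omega), if_pos (by omega)]
        have e2 : d (Fin.succ k) = c ⟨(k : ℕ), by omega⟩ := by
          simp only [hd, hsc]; rw [dif_neg (by omega), if_neg (by omega)]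
          congr 1
        rw [e1, e2]
        have : c ⟨(k : ℕ), by omega⟩ = c i.succ := by
          congr 1; exact Fin.ext (by simp [← h'])
        rw [this]; exact hw2
      · have e1 : d (Fin.castSucc k) = c ⟨(k : ℕ) - 1, by omega⟩ := by
          simp only [hd, hcs]; rw [dif_neg (by omega), if_neg (by omega)]
        have e2 : d (Fin.succ k) = c ⟨(k : ℕ), by omega⟩ := by
          simp only [hd, hsc]; rw [dif_neg (by omega), if_neg (by omega)]
          congr 1
        rw [e1, e2]
        exact hc (Fin.mk_lt_mk.2 (by omega))
  have := hmax (n + 1) d hdsm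
  omega

end Helpers

/-- Every finite extremal semidistributive lattice is trim: if a finite
semidistributive lattice of length `n` has exactly `n` join-irreducibles and
exactly `n` meet-irreducibles, then it possesses a maximal(-length) chain all
of whose elements are left modular. -/
theorem extremal_semidistributive_is_trim {L : Type*} [Lattice L] [Fintype L]
    (hSD₁ : ∀ x y z : L, x ⊔ y = x ⊔ z → x ⊔ (y ⊓ z) = x ⊔ y)
    (hSD₂ : ∀ x y z : L, x ⊓ y = x ⊓ z → x ⊓ (y ⊔ z) = x ⊓ y)
    (n : ℕ)
    (hchain : ∃ c : Fin (n + 1) → L, StrictMono c)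
    (hmax : ∀ (m : ℕ) (c : Fin (m + 1) → L), StrictMono c → m ≤ n)
    (hJ : Nat.card {a : L // SupIrred a} = n)
    (hM : Nat.card {a : L // InfIrred a} = n) :
    ∃ c : Fin (n + 1) → L, StrictMono c ∧ ∀ i, LeftModular (c i) := by
  classical
  obtain ⟨c, hc⟩ := hchain
  have hcov : ∀ i : Fin n, c i.castSucc ⋖ c i.succ := TW_chain_covers hc hmax
  choose j hjirr hjsup hjmin using fun i => TW_exists_min_label hSD₁ (hcov i)
  choose m hmirr hminf hmmax using fun i => TW_exists_max_label hSD₂ (hcov i)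
  have hjle : ∀ i, j i ≤ c i.succ := fun i => (hjsup i) ▸ le_sup_right
  have hjnle : ∀ i, ¬ j i ≤ c i.castSucc := fun i h =>
    (hcov i).lt.ne (by rw [← hjsup i, sup_eq_left.2 h])
  -- injectivity of j
  have hjlt : ∀ i i' : Fin n, (i : ℕ) < (i' : ℕ) → j i ≠ j i' := by
    intro i i' hii heq
    apply hjnle i'
    rw [← heq]
    exact (hjle i).trans (hc.monotone (by simp only [Fin.le_def, Fin.coe_castSucc, Fin.val_succ]; omega))
  have hjinj : Function.Injective j := by
    intro i i' heq
    by_contra hne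
    rcases lt_trichotomy (i : ℕ) (i' : ℕ) with h | h | h
    · exact hjlt i i' h heq
    · exact hne (Fin.ext h)
    · exact hjlt i' i h heq.symm
  -- surjectivity of j onto the join-irreducibles
  letI : Fintype {a : L // SupIrred a} := Fintype.ofFinite _
  have hsurj : ∀ x : L, SupIrred x → ∃ i, j i = x := by
    intro x hx
    set f : Fin n → {a : L // SupIrred a} := fun i => ⟨j i, hjirr i⟩ with hf
    have hfinj : Function.Injective f := fun i i' h =>
      hjinj (congrArg Subtype.val h)
    have hcard : Fintype.card {a : L // SupIrred a} = n := by
      rw [← Nat.card_eq_fintype_card]; exact hJ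
    have hbij : Function.Bijective f := by
      rw [Fintype.bijective_iff_injective_and_card]
      exact ⟨hfinj, by simp [hcard]⟩
    obtain ⟨i, hi⟩ := hbij.2 ⟨x, hx⟩
    exact ⟨i, congrArg Subtype.val hi⟩
  refine ⟨c, hc, ?_⟩
  intro k
  apply TW_leftModular
  intro a b hab hsup hinf
  obtain ⟨jj, hjjirr, hjja, hjjmin⟩ := TW_exists_min_label hSD₁ hab
  obtain ⟨i, hi⟩ := hsurj jj hjjirr
  subst hi
  by_cases hik : (i : ℕ) < (k : ℕ)
  · -- j i ≤ c k, hence j i ≤ a, contradiction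
    have h1 : j i ≤ c k := (hjle i).trans (hc.monotone (by simp only [Fin.le_def, Fin.coe_castSucc, Fin.val_succ]; omega))
    have h2 : j i ≤ b := hjja ▸ le_sup_right
    have h3 : j i ≤ a := by
      have : j i ≤ c k ⊓ b := le_inf h1 h2
      rw [← hinf] at this
      exact this.trans inf_le_right
    exact hab.lt.ne (by rw [← hjja, sup_eq_left.2 h3])
  · -- c k ≤ c i.castSucc ≤ m i, and m i transfers to the bad cover
    obtain ⟨mm, hmmirr, hmmb, hmmmax⟩ := TW_exists_max_label hSD₂ hab
    have htr : m i ≤ mm :=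
      TW_transfer hSD₂ (hcov i) hab (hjsup i) (hjmin i) hjja hjjmin (hminf i) hmmmax
    have hck : c k ≤ mm := by
      refine le_trans ?_ htr
      refine le_trans (hc.monotone (show k ≤ i.castSucc by simp only [Fin.le_def, Fin.coe_castSucc]; omega)) ?_
      exact (hminf i) ▸ inf_le_right
    have hale : a ≤ mm := hmmb ▸ inf_le_right
    have hble : b ≤ mm := by
      calc b ≤ c k ⊔ b := le_sup_right
        _ = c k ⊔ a := hsup.symm
        _ ≤ mm := sup_le hck hale
    exact hab.lt.ne' (by rw [← hmmb, inf_eq_left.2 hble])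
end

section
/- In a finite semidistributive lattice L, the collection of downward label sets equals the collection of upward label sets: { D_J(x) : x ∈ L } = { U_J(y) : y ∈ L }, where labels are the join-irreducibles γ_J of cover relations; hence rowmotion sending x to the unique y with D_J(x) = U_J(y) is well defined. -/
/-- `D_J(a)`: the set of join-irreducible labels `γ_J(w ⋖ a)` of covers below
`a`, where `γ_J(w ⋖ a)` is the minimal element `j` with `w ⊔ j = a`. -/
def downJLabels {L : Type*} [Lattice L] (a : L) : Set L :=
  {jj | ∃ w, w ⋖ a ∧ IsLeast {z : L | w ⊔ z = a} jj}

/-- `U_J(a)`: the set of join-irreducible labels `γ_J(a ⋖ z)` of covers above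
`a`. -/
def upJLabels {L : Type*} [Lattice L] (a : L) : Set L :=
  {jj | ∃ z', a ⋖ z' ∧ IsLeast {z : L | a ⊔ z = z'} jj}

section RowmotionAux

variable {L : Type*} [Lattice L] [Fintype L]

/-- A nonempty join-closed subset of a finite lattice has a greatest element. -/
lemma exists_greatest_aux {S : Set L} (hne : S.Nonempty)
    (hcl : ∀ x ∈ S, ∀ y ∈ S, x ⊔ y ∈ S) : ∃ m, IsGreatest S m := by
  obtain ⟨m, hm, hmax⟩ := Set.Finite.exists_maximalFor id S (Set.toFinite S) hne
  refine ⟨m, hm, fun y hy => ?_⟩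
  have h : m = m ⊔ y := le_antisymm le_sup_left (hmax (hcl m hm y hy) le_sup_left)
  exact le_sup_right.trans h.ge

/-- A nonempty meet-closed subset of a finite lattice has a least element. -/
lemma exists_least_aux {S : Set L} (hne : S.Nonempty)
    (hcl : ∀ x ∈ S, ∀ y ∈ S, x ⊓ y ∈ S) : ∃ m, IsLeast S m := by
  obtain ⟨m, hm, hmin⟩ := Set.Finite.exists_minimalFor id S (Set.toFinite S) hne
  refine ⟨m, hm, fun y hy => ?_⟩
  have h : m = m ⊓ y := le_antisymm (hmin (hcl m hm y hy) inf_le_left) inf_le_left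
  exact h.le.trans inf_le_right

lemma exists_covBy_between {x a : L} (h : x < a) : ∃ w, x ≤ w ∧ w ⋖ a := by
  obtain ⟨w, hw, hmax⟩ := Set.Finite.exists_maximalFor id {y | x ≤ y ∧ y < a}
    (Set.toFinite _) ⟨x, le_rfl, h⟩
  refine ⟨w, hw.1, hw.2, fun c hc hca => ?_⟩
  exact hc.not_ge (hmax ⟨hw.1.trans hc.le, hca⟩ hc.le)

lemma exists_covBy_between' {b y : L} (h : b < y) : ∃ z, b ⋖ z ∧ z ≤ y := by
  obtain ⟨z, hz, hmin⟩ := Set.Finite.exists_minimalFor id {c | b < c ∧ c ≤ y}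
    (Set.toFinite _) ⟨y, h, le_rfl⟩
  refine ⟨z, ⟨hz.1, fun c hc hcz => ?_⟩, hz.2⟩
  exact hcz.not_ge (hmin ⟨hc, hcz.le.trans hz.2⟩ hcz.le)

/-- Existence of the join label of a cover, using join-semidistributivity. -/
lemma label_exists (hSD₁ : ∀ x y z : L, x ⊔ y = x ⊔ z → x ⊔ (y ⊓ z) = x ⊔ y)
    {w a : L} (h : w ⋖ a) : ∃ j, IsLeast {z : L | w ⊔ z = a} j := by
  apply exists_least_aux (S := {z : L | w ⊔ z = a}) ⟨a, sup_eq_right.mpr h.le⟩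
  intro x hx y hy
  have h1 : w ⊔ x = w ⊔ y := by
    have hx' : w ⊔ x = a := hx
    have hy' : w ⊔ y = a := hy
    rw [hx', hy']
  have := hSD₁ w x y h1
  show w ⊔ (x ⊓ y) = a
  rw [this]; exact hx

omit [Fintype L] in
lemma label_le {w a j : L} (hc : w ⋖ a) (hj : IsLeast {z : L | w ⊔ z = a} j) : j ≤ a :=
  hj.2 (sup_eq_right.mpr hc.le)

omit [Fintype L] in
lemma label_not_le_w {w a j : L} (hc : w ⋖ a) (hj : IsLeast {z : L | w ⊔ z = a} j) :
    ¬ j ≤ w := by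
  intro hle
  have h1 : w ⊔ j = a := hj.1
  rw [sup_eq_left.mpr hle] at h1
  exact hc.ne h1

omit [Fintype L] in
/-- Every element strictly below the label `j` of a cover `w ⋖ a` lies below `w ⊓ j`;
in other words `w ⊓ j` is the unique maximal element below `j`. -/
lemma label_strict {w a j : L} (hc : w ⋖ a) (hj : IsLeast {z : L | w ⊔ z = a} j) :
    ∀ u, u < j → u ≤ w ⊓ j := by
  intro u hu
  have hua : w ⊔ u ≤ a := sup_le hc.le (hu.le.trans (label_le hc hj))
  rcases hc.eq_or_eq le_sup_left hua with h | h
  · exact le_inf (le_sup_right.trans h.le) hu.le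
  · exact absurd (hj.2 h) hu.not_ge

/-- An element is determined by its set of upward labels. -/
lemma up_inj (hSD₁ : ∀ x y z : L, x ⊔ y = x ⊔ z → x ⊔ (y ⊓ z) = x ⊔ y)
    (hSD₂ : ∀ x y z : L, x ⊓ y = x ⊓ z → x ⊓ (y ⊔ z) = x ⊓ y)
    {b b' : L} (h : upJLabels b = upJLabels b') : b = b' := by
  have key : ∀ u v : L, upJLabels u = upJLabels v → v ≤ u := by
    intro u v huv
    by_contra hvu
    have hlt : u < u ⊔ v := left_lt_sup.mpr hvu
    obtain ⟨z, hz, hzle⟩ := exists_covBy_between' hlt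
    obtain ⟨j, hj⟩ := label_exists hSD₁ hz
    have hjU : j ∈ upJLabels u := ⟨z, hz, hj⟩
    rw [huv] at hjU
    obtain ⟨z'', hz'', hj''⟩ := hjU
    have hju : ¬ j ≤ u := label_not_le_w hz hj
    have hjv : ¬ j ≤ v := label_not_le_w hz'' hj''
    have h1 : j ⊓ v ≤ u ⊓ j :=
      label_strict hz hj _ (lt_of_le_of_ne inf_le_left fun he => hjv (inf_eq_left.mp he))
    have h2 : j ⊓ u ≤ v ⊓ j :=
      label_strict hz'' hj'' _ (lt_of_le_of_ne inf_le_left fun he => hju (inf_eq_left.mp he))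
    have heq : j ⊓ u = j ⊓ v :=
      le_antisymm (h2.trans (inf_comm v j).le) (h1.trans (inf_comm u j).le)
    have h3 := hSD₂ j u v heq
    have hjz : j ≤ z := le_sup_right.trans hj.1.le
    have h4 : j ⊓ (u ⊔ v) = j := inf_eq_left.mpr (hjz.trans hzle)
    rw [h3] at h4
    exact hju (inf_eq_left.mp h4)
  exact le_antisymm (key b' b h.symm) (key b b' h)

/-- `a` is a least upper bound of its set of downward labels. -/
lemma down_le (hSD₁ : ∀ x y z : L, x ⊔ y = x ⊔ z → x ⊔ (y ⊓ z) = x ⊔ y)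
    {a t : L} (ht : ∀ j ∈ downJLabels a, j ≤ t) : a ≤ t := by
  by_contra hat
  have h : a ⊓ t < a := inf_lt_left.mpr hat
  obtain ⟨w, hw1, hw2⟩ := exists_covBy_between h
  obtain ⟨j, hj⟩ := label_exists hSD₁ hw2
  have hjt : j ≤ t := ht j ⟨w, hw2, hj⟩
  have hja : j ≤ a := label_le hw2 hj
  exact label_not_le_w hw2 hj ((le_inf hja hjt).trans hw1)

/-- An element is determined by its set of downward labels. -/
lemma down_inj (hSD₁ : ∀ x y z : L, x ⊔ y = x ⊔ z → x ⊔ (y ⊓ z) = x ⊔ y)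
    {a a' : L} (h : downJLabels a = downJLabels a') : a = a' := by
  have key : ∀ u v : L, downJLabels u = downJLabels v → u ≤ v := by
    intro u v huv
    apply down_le hSD₁
    intro j hj
    rw [huv] at hj
    obtain ⟨w, hw, hjw⟩ := hj
    exact label_le hw hjw
  exact le_antisymm (key a a' h) (key a' a h.symm)

/-- Existence of rowmotion: for every `a` there is `b` with `D_J(a) = U_J(b)`. -/
lemma exists_row (hSD₁ : ∀ x y z : L, x ⊔ y = x ⊔ z → x ⊔ (y ⊓ z) = x ⊔ y)
    (hSD₂ : ∀ x y z : L, x ⊓ y = x ⊓ z → x ⊓ (y ⊔ z) = x ⊓ y)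
    (a : L) : ∃ b, downJLabels a = upJLabels b := by
  classical
  -- choose a cover `W j ⋖ a` for each label `j ∈ D_J(a)`
  have hWex : ∀ j : L, ∃ w, j ∈ downJLabels a → w ⋖ a ∧ IsLeast {z : L | w ⊔ z = a} j := by
    intro j
    by_cases h : j ∈ downJLabels a
    · obtain ⟨w, hw⟩ := h; exact ⟨w, fun _ => hw⟩
    · exact ⟨a, fun h' => absurd h' h⟩
  choose W hW using hWex
  have hcov : ∀ j ∈ downJLabels a, W j ⋖ a := fun j hj => (hW j hj).1
  have hleast : ∀ j ∈ downJLabels a, IsLeast {z : L | W j ⊔ z = a} j := fun j hj => (hW j hj).2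
  have hnjw : ∀ j ∈ downJLabels a, ¬ j ≤ W j := fun j hj =>
    label_not_le_w (hcov j hj) (hleast j hj)
  have hstr : ∀ j ∈ downJLabels a, ∀ u, u < j → u ≤ W j ⊓ j := fun j hj =>
    label_strict (hcov j hj) (hleast j hj)
  have hjstar_lt : ∀ j ∈ downJLabels a, W j ⊓ j < j := fun j hj =>
    lt_of_le_of_ne inf_le_right fun he => hnjw j hj (inf_eq_right.mp he)
  -- distinct labels have distinct covers, and each label is below all other covers
  have hX : ∀ j ∈ downJLabels a, ∀ j' ∈ downJLabels a, j ≠ j' → j ≤ W j' := by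
    intro j hj j' hj' hne
    have hwne : W j ≠ W j' := by
      intro he
      have h2 := hleast j' hj'
      rw [← he] at h2
      exact hne ((hleast j hj).unique h2)
    apply (hleast j hj).2
    show W j ⊔ W j' = a
    rcases (hcov j hj).eq_or_eq le_sup_left (sup_le (hcov j hj).le (hcov j' hj').le) with h | h
    · exfalso
      have hle : W j' ≤ W j := sup_eq_left.mp h
      have : W j' = W j :=
        hle.eq_or_lt.resolve_right fun hlt => (hcov j' hj').2 hlt (hcov j hj).lt
      exact hwne this.symm
    · exact h
  -- the κ-companion of each label
  have hMex : ∀ j : L, ∃ m, j ∈ downJLabels a →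
      IsGreatest {x : L | W j ⊓ j ≤ x ∧ ¬ j ≤ x} m := by
    intro j
    by_cases hj : j ∈ downJLabels a
    · have hne : ({x : L | W j ⊓ j ≤ x ∧ ¬ j ≤ x}).Nonempty :=
        ⟨W j ⊓ j, le_rfl, fun h => hnjw j hj (h.trans inf_le_left)⟩
      have hcl : ∀ x ∈ {x : L | W j ⊓ j ≤ x ∧ ¬ j ≤ x}, ∀ y ∈ {x : L | W j ⊓ j ≤ x ∧ ¬ j ≤ x},
          x ⊔ y ∈ {x : L | W j ⊓ j ≤ x ∧ ¬ j ≤ x} := by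
        intro x hx y hy
        have hx' : j ⊓ x = W j ⊓ j :=
          le_antisymm
            (hstr j hj _ (lt_of_le_of_ne inf_le_left fun he => hx.2 (inf_eq_left.mp he)))
            (le_inf inf_le_right hx.1)
        have hy' : j ⊓ y = W j ⊓ j :=
          le_antisymm
            (hstr j hj _ (lt_of_le_of_ne inf_le_left fun he => hy.2 (inf_eq_left.mp he)))
            (le_inf inf_le_right hy.1)
        have h3 := hSD₂ j x y (hx'.trans hy'.symm)
        refine ⟨hx.1.trans le_sup_left, fun hle => ?_⟩
        have h4 : j ⊓ (x ⊔ y) = j := inf_eq_left.mpr hle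
        rw [h3, hx'] at h4
        exact (hjstar_lt j hj).ne h4
      obtain ⟨m, hm⟩ := exists_greatest_aux hne hcl
      exact ⟨m, fun _ => hm⟩
    · exact ⟨a, fun h' => absurd h' hj⟩
  choose M hM using hMex
  -- b is the greatest common lower bound of the `M j`
  have hTne : ({x : L | ∀ j ∈ downJLabels a, x ≤ M j}).Nonempty := by
    obtain ⟨bot, hbot⟩ := exists_least_aux (S := (Set.univ : Set L)) ⟨a, trivial⟩
      (fun _ _ _ _ => trivial)
    exact ⟨bot, fun j hj => hbot.2 trivial⟩
  have hTcl : ∀ x ∈ {x : L | ∀ j ∈ downJLabels a, x ≤ M j},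
      ∀ y ∈ {x : L | ∀ j ∈ downJLabels a, x ≤ M j},
      x ⊔ y ∈ {x : L | ∀ j ∈ downJLabels a, x ≤ M j} :=
    fun x hx y hy j hj => sup_le (hx j hj) (hy j hj)
  obtain ⟨b, hbT, hbub⟩ := exists_greatest_aux hTne hTcl
  have hWM : ∀ j ∈ downJLabels a, W j ≤ M j := fun j hj =>
    (hM j hj).2 ⟨inf_le_left, hnjw j hj⟩
  have hstarb : ∀ j ∈ downJLabels a, W j ⊓ j ≤ b := by
    intro j hj
    apply hbub
    intro j' hj'
    by_cases he : j = j'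
    · subst he; exact (hM j hj).2 ⟨le_rfl, fun h => hnjw j hj (h.trans inf_le_left)⟩
    · exact (inf_le_right.trans (hX j hj j' hj' he)).trans (hWM j' hj')
  have hnjb : ∀ j ∈ downJLabels a, ¬ j ≤ b := fun j hj hle =>
    (hM j hj).1.2 (hle.trans (hbT j hj))
  have hjM' : ∀ j ∈ downJLabels a, ∀ j' ∈ downJLabels a, j ≠ j' → j ≤ M j' :=
    fun j hj j' hj' hne => (hX j hj j' hj' hne).trans (hWM j' hj')
  -- each label of `a` labels a cover above `b`
  have hcoverA : ∀ j ∈ downJLabels a, b ⋖ b ⊔ j := by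
    intro j hj
    refine ⟨left_lt_sup.mpr (hnjb j hj), fun c hc hcj => ?_⟩
    have hjc : ¬ j ≤ c := fun hle => hcj.not_ge (sup_le hc.le hle)
    have hcT : c ∈ {x : L | ∀ j ∈ downJLabels a, x ≤ M j} := by
      intro j' hj'
      by_cases he : j = j'
      · subst he
        exact (hM j hj).2 ⟨(hstarb j hj).trans hc.le, hjc⟩
      · exact hcj.le.trans (sup_le (hbT j' hj') (hjM' j hj j' hj' he))
    exact hc.not_ge (hbub hcT)
  have hleastA : ∀ j ∈ downJLabels a, IsLeast {z : L | b ⊔ z = b ⊔ j} j := by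
    intro j hj
    refine ⟨rfl, fun z hz => ?_⟩
    by_contra hjz
    have h1 := hSD₁ b z j hz
    have h2 : z ⊓ j ≤ b :=
      (hstr j hj _ (lt_of_le_of_ne inf_le_right fun he => hjz (inf_eq_right.mp he))).trans
        (hstarb j hj)
    have h3 : b ⊔ j = b := by
      rw [← hz, ← h1]
      exact sup_eq_left.mpr h2
    exact hnjb j hj (le_sup_right.trans h3.le)
  refine ⟨b, ?_⟩
  ext x
  constructor
  · intro hx
    exact ⟨b ⊔ x, hcoverA x hx, hleastA x hx⟩
  · rintro ⟨z', hz', hx'⟩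
    have hz'T : ¬ ∀ j ∈ downJLabels a, z' ≤ M j := fun h => hz'.lt.not_ge (hbub h)
    push_neg at hz'T
    obtain ⟨j, hj, hjM⟩ := hz'T
    have hjz' : j ≤ z' := by
      by_contra hle
      exact hjM ((hM j hj).2 ⟨(hstarb j hj).trans hz'.lt.le, hle⟩)
    have hz'eq : z' = b ⊔ j := by
      have hlt : b < b ⊔ j := left_lt_sup.mpr (hnjb j hj)
      have hle : b ⊔ j ≤ z' := sup_le hz'.lt.le hjz'
      exact (hle.eq_or_lt.resolve_right (hz'.2 hlt)).symm
    rw [hz'eq] at hx'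
    have : j = x := (hleastA j hj).unique hx'
    rwa [← this]

end RowmotionAux

/-- In a finite semidistributive lattice, the collection of downward label sets
equals the collection of upward label sets, and rowmotion — sending `a` to the
unique `b` with `D_J(a) = U_J(b)` — is well defined. -/
theorem semidistrib_rowmotion_well_defined {L : Type*} [Lattice L] [Fintype L]
    (hSD₁ : ∀ x y z : L, x ⊔ y = x ⊔ z → x ⊔ (y ⊓ z) = x ⊔ y)
    (hSD₂ : ∀ x y z : L, x ⊓ y = x ⊓ z → x ⊓ (y ⊔ z) = x ⊓ y) :
    Set.range (downJLabels (L := L)) = Set.range (upJLabels (L := L)) ∧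
    ∀ a : L, ∃! b : L, downJLabels a = upJLabels b := by
  classical
  choose row hrowspec using exists_row hSD₁ hSD₂
  have hinj : Function.Injective row := by
    intro x y hxy
    apply down_inj hSD₁
    rw [hrowspec x, hrowspec y, hxy]
  have hsurj : Function.Surjective row := Finite.injective_iff_surjective.mp hinj
  constructor
  · ext S
    simp only [Set.mem_range]
    constructor
    · rintro ⟨x, rfl⟩; exact ⟨row x, (hrowspec x).symm⟩
    · rintro ⟨y, rfl⟩
      obtain ⟨x, rfl⟩ := hsurj y
      exact ⟨x, hrowspec x⟩
  · intro a
    exact ⟨row a, hrowspec a, fun b' hb' =>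
      up_inj hSD₁ hSD₂ (hb'.symm.trans (hrowspec a))⟩
end
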